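/- arXiv:1205.1334 — 2 statements merged into one kernel-verified Lean document; each statement's English description precedes it below -/
import Mathlib

section
/- Let G be a finite simple connected graph with resolving number res(G) ≥ 3 which is not isomorphic to a cycle of even length. Then the diameter of G satisfies d(G) ≤ 3·res(G) − 5. -/
/-- `S` is a resolving set of `G`: every pair of distinct vertices is resolved
by some vertex of `S`, i.e. some `u ∈ S` has different distances to the two vertices. -/
def IsResolvingSet {V : Type*} (G : SimpleGraph V) (S : Set V) : Prop :=
  ∀ x y : V, x ≠ y → ∃ u ∈ S, G.dist u x ≠ G.dist u y

/-- The metric dimension of `G`: minimum size of a resolving set. -/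
noncomputable def metricDim {V : Type*} [Fintype V] (G : SimpleGraph V) : ℕ :=
  sInf {k | ∃ S : Finset V, S.card = k ∧ IsResolvingSet G ↑S}

/-- The upper dimension of `G`: maximum size of a minimal resolving set. -/
noncomputable def upperDim {V : Type*} [Fintype V] (G : SimpleGraph V) : ℕ :=
  sSup {k | ∃ S : Finset V, S.card = k ∧ IsResolvingSet G ↑S ∧
    ∀ T : Finset V, T ⊂ S → ¬ IsResolvingSet G ↑T}

/-- The resolving number of `G`: minimum `k` such that every `k`-subset of
the vertex set is a resolving set. -/
noncomputable def resolvingNumber {V : Type*} [Fintype V] (G : SimpleGraph V) : ℕ :=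
  sInf {k | ∀ S : Finset V, S.card = k → IsResolvingSet G ↑S}

section Aux

open SimpleGraph Finset

variable {V : Type*} [Fintype V] [DecidableEq V] {G : SimpleGraph V}

lemma resolve_of_card_res (S : Finset V) (hS : S.card = resolvingNumber G) :
    IsResolvingSet G ↑S := by
  have hne : {k | ∀ S : Finset V, S.card = k → IsResolvingSet G ↑S}.Nonempty := by
    refine ⟨Fintype.card V + 1, fun T hT => ?_⟩
    have := T.card_le_univ
    omega
  exact Nat.sInf_mem hne S hS

lemma bisector_lt_res {p q : V} (hpq : p ≠ q) :
    (Finset.univ.filter fun z => G.dist z p = G.dist z q).card < resolvingNumber G := by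
  by_contra hc
  push_neg at hc
  obtain ⟨T, hTsub, hTcard⟩ := Finset.exists_subset_card_eq hc
  obtain ⟨u, hu, hne⟩ := resolve_of_card_res T hTcard p q hpq
  have := hTsub (by simpa using hu)
  simp only [Finset.mem_filter] at this
  exact hne this.2

lemma exists_two_equidistant (hres : 3 ≤ resolvingNumber G) :
    ∃ p q s₁ s₂ : V, p ≠ q ∧ s₁ ≠ s₂ ∧ G.dist s₁ p = G.dist s₁ q ∧
      G.dist s₂ p = G.dist s₂ q := by
  have h2 : 2 ∉ {k | ∀ S : Finset V, S.card = k → IsResolvingSet G ↑S} := by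
    intro h
    have := Nat.sInf_le h
    unfold resolvingNumber at hres
    omega
  simp only [Set.mem_setOf_eq, not_forall] at h2
  obtain ⟨S, hScard, hSnr⟩ := h2
  unfold IsResolvingSet at hSnr
  push_neg at hSnr
  obtain ⟨p, q, hpq, hall⟩ := hSnr
  obtain ⟨s₁, s₂, hs, rfl⟩ := Finset.card_eq_two.mp hScard
  exact ⟨p, q, s₁, s₂, hpq, hs, hall s₁ (by simp), hall s₂ (by simp)⟩

set_option linter.unusedSectionVars false


lemma exists_geodesic (hconn : G.Connected) (u v : V) :
    ∃ x : ℕ → V, x 0 = u ∧ x (G.dist u v) = v ∧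
      ∀ i j : ℕ, i ≤ j → j ≤ G.dist u v → G.dist (x i) (x j) = j - i := by
  obtain ⟨p, hp⟩ := hconn.exists_walk_length_eq_dist u v
  set d := G.dist u v with hd
  refine ⟨p.getVert, p.getVert_zero, by rw [← hp]; exact p.getVert_length, ?_⟩
  have hstep : ∀ i : ℕ, G.dist (p.getVert i) (p.getVert (i + 1)) ≤ 1 := by
    intro i
    by_cases hi : i < p.length
    · exact le_of_eq (SimpleGraph.dist_eq_one_iff_adj.mpr (p.adj_getVert_succ hi))
    · push_neg at hi
      rw [p.getVert_of_length_le hi, p.getVert_of_length_le (by omega)]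
      exact le_trans SimpleGraph.dist_self.le (Nat.zero_le 1)
  have hchain : ∀ i j : ℕ, i ≤ j → G.dist (p.getVert i) (p.getVert j) ≤ j - i := by
    intro i j hij
    obtain ⟨m, rfl⟩ := Nat.exists_eq_add_of_le hij
    induction m with
    | zero => simp
    | succ m ih =>
      rw [show i + (m + 1) = i + m + 1 from rfl]
      calc G.dist (p.getVert i) (p.getVert (i + m + 1))
          ≤ G.dist (p.getVert i) (p.getVert (i + m)) +
            G.dist (p.getVert (i + m)) (p.getVert (i + m + 1)) := by
            have := hconn.dist_triangle (u := p.getVert i) (v := p.getVert (i+m))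
              (w := p.getVert (i + m + 1))
            omega
        _ ≤ (i + m - i) + 1 := by
            have := ih (by omega)
            have := hstep (i + m)
            omega
        _ ≤ i + (m+1) - i := by omega
  intro i j hij hjd
  have h1 : G.dist (p.getVert i) (p.getVert j) ≤ j - i := hchain i j hij
  have h2 : G.dist u (p.getVert i) ≤ i := by
    have := hchain 0 i (by omega); simpa using this
  have h3 : G.dist (p.getVert j) v ≤ d - j := by
    have := hchain j d hjd
    rw [← hp] at this ⊢
    simpa [p.getVert_length] using this
  have h4 : d ≤ G.dist u (p.getVert i) + G.dist (p.getVert i) (p.getVert j) +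
      G.dist (p.getVert j) v := by
    have t1 := hconn.dist_triangle (u := u) (v := p.getVert i) (w := p.getVert j)
    have t2 := hconn.dist_triangle (u := u) (v := p.getVert j) (w := v)
    omega
  omega



lemma caseA_false (hconn : G.Connected) (x : ℕ → V) (d R : ℕ)
    (hgeo : ∀ i j : ℕ, i ≤ j → j ≤ d → G.dist (x i) (x j) = j - i)
    (hbis : ∀ p q : V, p ≠ q →
      (Finset.univ.filter fun w => G.dist w p = G.dist w q).card < R)
    (hR : 3 ≤ R) (hd : 3 * R - 4 ≤ d)
    (z : V) (hz : ∀ j, j ≤ d → z ≠ x j)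
    (t : ℕ) (ht1 : 1 ≤ t) (ht2 : t + 1 ≤ d) (hadj : G.Adj z (x t)) : False := by
  have hxinj : ∀ i j, i ≤ d → j ≤ d → x i = x j → i = j := by
    intro i j hi hj he
    rcases le_total i j with h | h
    · have := hgeo i j h hj
      rw [he, SimpleGraph.dist_self] at this
      omega
    · have := hgeo j i h hi
      rw [he, SimpleGraph.dist_self] at this
      omega
  have hft : G.dist z (x t) = 1 := SimpleGraph.dist_eq_one_iff_adj.mpr hadj
  have hfpos : ∀ j, j ≤ d → 1 ≤ G.dist z (x j) := by
    intro j hj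
    have h0 : G.dist z (x j) ≠ 0 := by
      intro h
      exact hz j hj ((hconn z (x j)).dist_eq_zero_iff.mp h)
    omega
  have hxd : ∀ i j, i ≤ d → j ≤ d → G.dist (x i) (x j) = max i j - min i j := by
    intro i j hi hj
    rcases le_total i j with h | h
    · rw [hgeo i j h hj]; omega
    · rw [SimpleGraph.dist_comm, hgeo j i h hi]; omega
  have hb1 : ∀ j, j ≤ d → G.dist z (x j) ≤ (max j t - min j t) + 1 := by
    intro j hj
    have h := hconn.dist_triangle (u := z) (v := x t) (w := x j)
    rw [hft, hxd t j (by omega) hj] at h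
    omega
  have hb2 : ∀ j, j ≤ d → (max j t - min j t) ≤ G.dist z (x j) + 1 := by
    intro j hj
    have h := hconn.dist_triangle (u := x t) (v := z) (w := x j)
    rw [SimpleGraph.dist_comm (u := x t) (v := z), hft, hxd t j (by omega) hj] at h
    omega
  set J : ℕ → Finset ℕ :=
    fun s => (Finset.range (d+1)).filter (fun j => G.dist z (x j) = max j s - min j s)
    with hJ
  have hcardJ : ∀ s, s ≤ d → (J s).card < R := by
    intro s hs
    have hsub : (J s).card ≤
        (Finset.univ.filter fun w => G.dist w z = G.dist w (x s)).card := by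
      apply Finset.card_le_card_of_injOn x
      · intro j hj
        simp only [hJ, Finset.mem_coe, Finset.mem_filter, Finset.mem_range] at hj
        simp only [Finset.mem_coe, Finset.mem_filter, Finset.mem_univ, true_and]
        rw [SimpleGraph.dist_comm (u := x j) (v := z), hj.2, hxd j s (by omega) hs]
      · intro i hi j hj he
        have hi' := Finset.mem_filter.mp (Finset.mem_coe.mp hi)
        have hj' := Finset.mem_filter.mp (Finset.mem_coe.mp hj)
        exact hxinj i j (Nat.lt_succ_iff.mp (Finset.mem_range.mp hi'.1))
          (Nat.lt_succ_iff.mp (Finset.mem_range.mp hj'.1)) he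
    have := hbis z (x s) (hz s hs)
    calc (J s).card ≤ _ := hsub
      _ = (Finset.univ.filter fun w => G.dist w z = G.dist w (x s)).card := rfl
      _ < R := by
        have heq : (Finset.univ.filter fun w => G.dist w z = G.dist w (x s)) =
            (Finset.univ.filter fun w => G.dist w z = G.dist w (x s)) := rfl
        exact this
  have hcover : ∀ j, j ≤ d → j ≠ t → j ∈ J t ∨ j ∈ J (t-1) ∨ j ∈ J (t+1) := by
    intro j hj hjt
    have h1 := hb1 j hj
    have h2 := hb2 j hj
    have h3 := hfpos j hj
    by_cases h0 : G.dist z (x j) = max j t - min j t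
    · exact Or.inl (Finset.mem_filter.mpr ⟨Finset.mem_range.mpr (by omega), h0⟩)
    by_cases hm : G.dist z (x j) = max j (t-1) - min j (t-1)
    · exact Or.inr (Or.inl (Finset.mem_filter.mpr ⟨Finset.mem_range.mpr (by omega), hm⟩))
    refine Or.inr (Or.inr (Finset.mem_filter.mpr ⟨Finset.mem_range.mpr (by omega), ?_⟩))
    omega
  have htm : t ∈ J (t-1) := Finset.mem_filter.mpr ⟨Finset.mem_range.mpr (by omega), by
    rw [hft]; omega⟩
  have htp : t ∈ J (t+1) := Finset.mem_filter.mpr ⟨Finset.mem_range.mpr (by omega), by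
    rw [hft]; omega⟩
  have hsub2 : Finset.range (d+1) ⊆ ((J (t-1)).erase t) ∪ (J t ∪ J (t+1)) := by
    intro j hj
    have hjd : j ≤ d := by simpa using Nat.lt_succ_iff.mp (Finset.mem_range.mp hj)
    by_cases hjt : j = t
    · subst hjt
      exact Finset.mem_union.mpr (Or.inr (Finset.mem_union.mpr (Or.inr htp)))
    rcases hcover j hjd hjt with h | h | h
    · exact Finset.mem_union.mpr (Or.inr (Finset.mem_union.mpr (Or.inl h)))
    · exact Finset.mem_union.mpr (Or.inl (Finset.mem_erase.mpr ⟨hjt, h⟩))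
    · exact Finset.mem_union.mpr (Or.inr (Finset.mem_union.mpr (Or.inr h)))
  have hcount : d + 1 ≤ ((J (t-1)).card - 1) + ((J t).card + (J (t+1)).card) := by
    have h1 : (Finset.range (d+1)).card ≤ (((J (t-1)).erase t) ∪ (J t ∪ J (t+1))).card :=
      Finset.card_le_card hsub2
    have h2 : (((J (t-1)).erase t) ∪ (J t ∪ J (t+1))).card ≤
        ((J (t-1)).erase t).card + (J t ∪ J (t+1)).card := Finset.card_union_le _ _
    have h3 : (J t ∪ J (t+1)).card ≤ (J t).card + (J (t+1)).card := Finset.card_union_le _ _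
    have h4 : ((J (t-1)).erase t).card = (J (t-1)).card - 1 :=
      Finset.card_erase_of_mem htm
    have h5 : 1 ≤ (J (t-1)).card := Finset.card_pos.mpr ⟨t, htm⟩
    simp only [Finset.card_range] at h1
    omega
  have c1 := hcardJ (t-1) (by omega)
  have c2 := hcardJ t (by omega)
  have c3 := hcardJ (t+1) (by omega)
  omega



/-- neighbor on a geodesic towards w -/
lemma nbr_toward (hconn : G.Connected) (z w : V) (h : 1 ≤ G.dist z w) :
    ∃ y, G.Adj z y ∧ G.dist y w = G.dist z w - 1 := by
  obtain ⟨W, hW⟩ := hconn.exists_walk_length_eq_dist z w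
  have hnil : ¬ W.Nil := by
    rw [SimpleGraph.Walk.not_nil_iff_lt_length]
    omega
  refine ⟨W.getVert 1, W.adj_snd hnil, ?_⟩
  have h1 : G.dist (W.getVert 1) w ≤ W.tail.length := SimpleGraph.dist_le _
  have h2 : W.tail.length + 1 = W.length := SimpleGraph.Walk.length_tail_add_one hnil
  have h3 : G.dist z w ≤ G.dist z (W.getVert 1) + G.dist (W.getVert 1) w :=
    hconn.dist_triangle
  have h4 : G.dist z (W.getVert 1) = 1 :=
    SimpleGraph.dist_eq_one_iff_adj.mpr (W.adj_snd hnil)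
  omega

section geo

variable (x : ℕ → V) (d : ℕ)

/-- lower bound on walks from off-path vertices -/
lemma walk_lb (hconn : G.Connected)
    (hgeo : ∀ i j : ℕ, i ≤ j → j ≤ d → G.dist (x i) (x j) = j - i)
    (hB : ∀ z, (∀ j, j ≤ d → z ≠ x j) → ∀ t, 1 ≤ t → t + 1 ≤ d → ¬G.Adj z (x t))
    (j : ℕ) (hj : j ≤ d) :
    ∀ (n : ℕ) (z : V) (W : G.Walk z (x j)), W.length = n → (∀ i, i ≤ d → z ≠ x i) →
      min (G.dist z (x 0) + j) (G.dist z (x d) + (d - j)) ≤ n := by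
  intro n
  induction n using Nat.strong_induction_on with
  | _ n ih =>
    intro z W hWn hz
    cases W with
    | nil => exact absurd rfl (hz j hj)
    | @cons _ y _ h W' =>
      simp only [SimpleGraph.Walk.length_cons] at hWn
      have hzy : G.dist z y = 1 := SimpleGraph.dist_eq_one_iff_adj.mpr h
      by_cases hy : ∀ i, i ≤ d → y ≠ x i
      · have hIH := ih W'.length (by omega) y W' rfl hy
        have t1 : G.dist z (x 0) ≤ G.dist z y + G.dist y (x 0) := hconn.dist_triangle
        have t2 : G.dist z (x d) ≤ G.dist z y + G.dist y (x d) := hconn.dist_triangle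
        omega
      · push_neg at hy
        obtain ⟨i, hid, rfl⟩ := hy
        have hi0d : i = 0 ∨ i = d := by
          by_contra hcon
          push_neg at hcon
          exact hB z hz i (by omega) (by omega) h
        have hlen : G.dist (x i) (x j) ≤ W'.length := SimpleGraph.dist_le _
        rcases hi0d with hi | hi
        · subst hi
          have : G.dist (x 0) (x j) = j := by simpa using hgeo 0 j (by omega) hj
          omega
        · have hzy' : G.dist z (x d) = 1 := by rw [← hi]; exact hzy
          have hlen' : G.dist (x d) (x j) ≤ W'.length := by rw [← hi]; exact hlen
          have : G.dist (x d) (x j) = d - j := by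
            rw [SimpleGraph.dist_comm]; exact hgeo j d hj le_rfl
          omega

lemma profile (hconn : G.Connected)
    (hgeo : ∀ i j : ℕ, i ≤ j → j ≤ d → G.dist (x i) (x j) = j - i)
    (hB : ∀ z, (∀ j, j ≤ d → z ≠ x j) → ∀ t, 1 ≤ t → t + 1 ≤ d → ¬G.Adj z (x t))
    (z : V) (hz : ∀ i, i ≤ d → z ≠ x i) (j : ℕ) (hj : j ≤ d) :
    G.dist z (x j) = min (G.dist z (x 0) + j) (G.dist z (x d) + (d - j)) := by
  have hle : G.dist z (x j) ≤ min (G.dist z (x 0) + j) (G.dist z (x d) + (d - j)) := by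
    have t1 : G.dist z (x j) ≤ G.dist z (x 0) + G.dist (x 0) (x j) := hconn.dist_triangle
    have t2 : G.dist z (x j) ≤ G.dist z (x d) + G.dist (x d) (x j) := hconn.dist_triangle
    have e1 : G.dist (x 0) (x j) = j := by simpa using hgeo 0 j (by omega) hj
    have e2 : G.dist (x d) (x j) = d - j := by
      rw [SimpleGraph.dist_comm]; exact hgeo j d hj le_rfl
    omega
  obtain ⟨W, hW⟩ := hconn.exists_walk_length_eq_dist z (x j)
  have := walk_lb x d hconn hgeo hB j hj W.length z W rfl hz
  omega

lemma off_basic (hconn : G.Connected)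
    (hgeo : ∀ i j : ℕ, i ≤ j → j ≤ d → G.dist (x i) (x j) = j - i)
    (hB : ∀ z, (∀ j, j ≤ d → z ≠ x j) → ∀ t, 1 ≤ t → t + 1 ≤ d → ¬G.Adj z (x t))
    (hdiam : ∀ p q : V, G.dist p q ≤ d)
    (z : V) (hz : ∀ i, i ≤ d → z ≠ x i) :
    1 ≤ G.dist z (x 0) ∧ G.dist z (x 0) ≤ d ∧ 1 ≤ G.dist z (x d) ∧ G.dist z (x d) ≤ d ∧
      d ≤ G.dist z (x 0) + G.dist z (x d) ∧ G.dist z (x 0) + G.dist z (x d) ≤ d + 1 := by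
  set a := G.dist z (x 0) with ha
  set c := G.dist z (x d) with hc
  have h1 : 1 ≤ a := by
    have h0 : a ≠ 0 := fun h => hz 0 (by omega) ((hconn z (x 0)).dist_eq_zero_iff.mp h)
    omega
  have h2 : a ≤ d := hdiam z (x 0)
  have h3 : 1 ≤ c := by
    have h0 : c ≠ 0 := fun h => hz d le_rfl ((hconn z (x d)).dist_eq_zero_iff.mp h)
    omega
  have h4 : c ≤ d := hdiam z (x d)
  have h5 : d ≤ a + c := by
    have t := hconn.dist_triangle (u := x 0) (v := z) (w := x d)
    have e : G.dist (x 0) (x d) = d := by simpa using hgeo 0 d (by omega) le_rfl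
    rw [SimpleGraph.dist_comm (u := x 0) (v := z)] at t
    omega
  refine ⟨h1, h2, h3, h4, h5, ?_⟩
  set j₀ := (c + d - a) / 2 with hj₀
  have hj₀d : j₀ ≤ d := by omega
  have hp := profile x d hconn hgeo hB z hz j₀ hj₀d
  have hdz := hdiam z (x j₀)
  omega

lemma off_uniq
    (hgeo : ∀ i j : ℕ, i ≤ j → j ≤ d → G.dist (x i) (x j) = j - i)
    (hbis : ∀ p q : V, p ≠ q →
      (Finset.univ.filter fun w => G.dist w p = G.dist w q).card < R)
    (hconn : G.Connected)
    (hB : ∀ z, (∀ j, j ≤ d → z ≠ x j) → ∀ t, 1 ≤ t → t + 1 ≤ d → ¬G.Adj z (x t))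
    (hR : 3 ≤ R) (hd : 3 * R - 4 ≤ d)
    (z z' : V) (hz : ∀ i, i ≤ d → z ≠ x i) (hz' : ∀ i, i ≤ d → z' ≠ x i)
    (haa : G.dist z (x 0) = G.dist z' (x 0)) (hcc : G.dist z (x d) = G.dist z' (x d)) :
    z = z' := by
  by_contra hne
  have hxinj : ∀ i j, i ≤ d → j ≤ d → x i = x j → i = j := by
    intro i j hi hj he
    rcases le_total i j with h | h
    · have := hgeo i j h hj; rw [he, SimpleGraph.dist_self] at this; omega
    · have := hgeo j i h hi; rw [he, SimpleGraph.dist_self] at this; omega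
  have hsub : (Finset.range (d+1)).image x ⊆
      (Finset.univ.filter fun w => G.dist w z = G.dist w z') := by
    intro w hw
    obtain ⟨j, hj, rfl⟩ := Finset.mem_image.mp hw
    have hjd : j ≤ d := by
      have := Finset.mem_range.mp hj; omega
    simp only [Finset.mem_filter, Finset.mem_univ, true_and]
    rw [SimpleGraph.dist_comm (u := x j) (v := z), SimpleGraph.dist_comm (u := x j) (v := z'),
      profile x d hconn hgeo hB z hz j hjd, profile x d hconn hgeo hB z' hz' j hjd, haa, hcc]
  have hcard : ((Finset.range (d+1)).image x).card = d + 1 := by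
    rw [Finset.card_image_of_injOn, Finset.card_range]
    intro i hi j hj he
    exact hxinj i j (Nat.lt_succ_iff.mp (Finset.mem_range.mp hi))
      (Nat.lt_succ_iff.mp (Finset.mem_range.mp hj)) he
  have := Finset.card_le_card hsub
  have := hbis z z' hne
  omega

lemma stepL (hconn : G.Connected)
    (hgeo : ∀ i j : ℕ, i ≤ j → j ≤ d → G.dist (x i) (x j) = j - i)
    (hB : ∀ z, (∀ j, j ≤ d → z ≠ x j) → ∀ t, 1 ≤ t → t + 1 ≤ d → ¬G.Adj z (x t))
    (hdiam : ∀ p q : V, G.dist p q ≤ d)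
    (z : V) (hz : ∀ i, i ≤ d → z ≠ x i) (h2 : 2 ≤ G.dist z (x 0)) :
    ∃ y, G.Adj z y ∧ (∀ i, i ≤ d → y ≠ x i) ∧ G.dist y (x 0) = G.dist z (x 0) - 1 := by
  obtain ⟨y, hadj, hyd⟩ := nbr_toward hconn z (x 0) (by omega)
  refine ⟨y, hadj, ?_, hyd⟩
  have hbz := off_basic x d hconn hgeo hB hdiam z hz
  by_contra hy
  push_neg at hy
  obtain ⟨i, hid, rfl⟩ := hy
  have : G.dist (x i) (x 0) = i := by
    rw [SimpleGraph.dist_comm]; simpa using hgeo 0 i (by omega) hid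
  have hieq : i = G.dist z (x 0) - 1 := by omega
  exact hB z hz i (by omega) (by omega) hadj

lemma stepR (hconn : G.Connected)
    (hgeo : ∀ i j : ℕ, i ≤ j → j ≤ d → G.dist (x i) (x j) = j - i)
    (hB : ∀ z, (∀ j, j ≤ d → z ≠ x j) → ∀ t, 1 ≤ t → t + 1 ≤ d → ¬G.Adj z (x t))
    (hdiam : ∀ p q : V, G.dist p q ≤ d)
    (z : V) (hz : ∀ i, i ≤ d → z ≠ x i) (h2 : 2 ≤ G.dist z (x d)) :
    ∃ y, G.Adj z y ∧ (∀ i, i ≤ d → y ≠ x i) ∧ G.dist y (x d) = G.dist z (x d) - 1 := by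
  obtain ⟨y, hadj, hyd⟩ := nbr_toward hconn z (x d) (by omega)
  refine ⟨y, hadj, ?_, hyd⟩
  have hbz := off_basic x d hconn hgeo hB hdiam z hz
  by_contra hy
  push_neg at hy
  obtain ⟨i, hid, rfl⟩ := hy
  have : G.dist (x i) (x d) = d - i := hgeo i d hid le_rfl
  have hieq : d - i = G.dist z (x d) - 1 := by omega
  exact hB z hz i (by omega) (by omega) hadj

end geo



section geo
variable (x : ℕ → V) (d R : ℕ)

lemma Wclosure (hconn : G.Connected)
    (hgeo : ∀ i j : ℕ, i ≤ j → j ≤ d → G.dist (x i) (x j) = j - i)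
    (hB : ∀ z, (∀ j, j ≤ d → z ≠ x j) → ∀ t, 1 ≤ t → t + 1 ≤ d → ¬G.Adj z (x t))
    (hdiam : ∀ p q : V, G.dist p q ≤ d)
    (z0 : V) (hz0 : ∀ i, i ≤ d → z0 ≠ x i)
    (he0 : G.dist z0 (x 0) + G.dist z0 (x d) = d) :
    ∀ α, 1 ≤ α → α ≤ d - 1 →
      ∃ z, (∀ i, i ≤ d → z ≠ x i) ∧ G.dist z (x 0) = α ∧ G.dist z (x d) = d - α := by
  have hb0 := off_basic x d hconn hgeo hB hdiam z0 hz0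
  set a0 := G.dist z0 (x 0) with ha0
  have hdown : ∀ m, m ≤ a0 - 1 →
      ∃ z, (∀ i, i ≤ d → z ≠ x i) ∧ G.dist z (x 0) = a0 - m ∧
        G.dist z (x d) = d - (a0 - m) := by
    intro m
    induction m with
    | zero => intro _; exact ⟨z0, hz0, rfl, by omega⟩
    | succ m ih =>
      intro hm
      obtain ⟨z, hz, hza, hzc⟩ := ih (by omega)
      obtain ⟨y, hadj, hy, hya⟩ := stepL x d hconn hgeo hB hdiam z hz (by omega)
      have hby := off_basic x d hconn hgeo hB hdiam y hy
      have ht : G.dist y (x d) ≤ G.dist y z + G.dist z (x d) := hconn.dist_triangle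
      have hyz : G.dist y z = 1 := by
        rw [SimpleGraph.dist_comm]; exact SimpleGraph.dist_eq_one_iff_adj.mpr hadj
      exact ⟨y, hy, by omega, by omega⟩
  have hup : ∀ m, a0 + m ≤ d - 1 →
      ∃ z, (∀ i, i ≤ d → z ≠ x i) ∧ G.dist z (x 0) = a0 + m ∧
        G.dist z (x d) = d - (a0 + m) := by
    intro m
    induction m with
    | zero => intro _; exact ⟨z0, hz0, rfl, by omega⟩
    | succ m ih =>
      intro hm
      obtain ⟨z, hz, hza, hzc⟩ := ih (by omega)
      obtain ⟨y, hadj, hy, hyc⟩ := stepR x d hconn hgeo hB hdiam z hz (by omega)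
      have hby := off_basic x d hconn hgeo hB hdiam y hy
      have ht : G.dist y (x 0) ≤ G.dist y z + G.dist z (x 0) := hconn.dist_triangle
      have hyz : G.dist y z = 1 := by
        rw [SimpleGraph.dist_comm]; exact SimpleGraph.dist_eq_one_iff_adj.mpr hadj
      exact ⟨y, hy, by omega, by omega⟩
  intro α h1 h2
  rcases le_total α a0 with h | h
  · obtain ⟨z, hz, hza, hzc⟩ := hdown (a0 - α) (by omega)
    exact ⟨z, hz, by omega, by omega⟩
  · obtain ⟨z, hz, hza, hzc⟩ := hup (α - a0) (by omega)
    exact ⟨z, hz, by omega, by omega⟩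

lemma coexist_false (hconn : G.Connected)
    (hgeo : ∀ i j : ℕ, i ≤ j → j ≤ d → G.dist (x i) (x j) = j - i)
    (hbis : ∀ p q : V, p ≠ q →
      (Finset.univ.filter fun w => G.dist w p = G.dist w q).card < R)
    (hB : ∀ z, (∀ j, j ≤ d → z ≠ x j) → ∀ t, 1 ≤ t → t + 1 ≤ d → ¬G.Adj z (x t))
    (hdiam : ∀ p q : V, G.dist p q ≤ d)
    (hR : 3 ≤ R) (hd : 3 * R - 4 ≤ d)
    (z0 : V) (hz0 : ∀ i, i ≤ d → z0 ≠ x i)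
    (he0 : G.dist z0 (x 0) + G.dist z0 (x d) = d)
    (z1 : V) (hz1 : ∀ i, i ≤ d → z1 ≠ x i)
    (he1 : G.dist z1 (x 0) + G.dist z1 (x d) = d + 1) : False := by
  have hW := Wclosure x d hconn hgeo hB hdiam z0 hz0 he0
  have hb1 := off_basic x d hconn hgeo hB hdiam z1 hz1
  set a1 := G.dist z1 (x 0) with ha1
  have hxinj : ∀ i j, i ≤ d → j ≤ d → x i = x j → i = j := by
    intro i j hi hj he
    rcases le_total i j with h | h
    · have := hgeo i j h hj; rw [he, SimpleGraph.dist_self] at this; omega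
    · have := hgeo j i h hi; rw [he, SimpleGraph.dist_self] at this; omega
  -- generic: a bisector of z1 with a W-vertex
  have hbig : ∀ (w : V) (lo hi : ℕ), (∀ i, i ≤ d → w ≠ x i) → z1 ≠ w → hi ≤ d →
      (∀ j, lo ≤ j → j ≤ hi → G.dist (x j) z1 = G.dist (x j) w) →
      hi + 1 - lo < R := by
    intro w lo hi hw hne hhi hagree
    have hsub : (Finset.Ico lo (hi+1)).image x ⊆
        (Finset.univ.filter fun w' => G.dist w' z1 = G.dist w' w) := by
      intro w' hw'
      obtain ⟨j, hj, rfl⟩ := Finset.mem_image.mp hw'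
      have hj' := Finset.mem_Ico.mp hj
      simp only [Finset.mem_filter, Finset.mem_univ, true_and]
      exact hagree j hj'.1 (by omega)
    have hcard : ((Finset.Ico lo (hi+1)).image x).card = hi + 1 - lo := by
      rw [Finset.card_image_of_injOn, Nat.card_Ico]
      intro i hi' j hj' he
      have h1 := Finset.mem_Ico.mp hi'
      have h2 := Finset.mem_Ico.mp hj'
      exact hxinj i j (by omega) (by omega) he
    have := Finset.card_le_card hsub
    have := hbis z1 w hne
    omega
  have case1 : a1 ≤ d - 1 → d - a1 + 1 < R := by
    intro h
    obtain ⟨w, hw, hwa, hwc⟩ := hW a1 (by omega) h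
    have hne : z1 ≠ w := by
      intro hcon
      rw [hcon] at he1
      omega
    refine hbig w 0 (d - a1) hw hne (by omega) ?_
    intro j hj1 hj2
    have p1 := profile x d hconn hgeo hB z1 hz1 j (by omega)
    have p2 := profile x d hconn hgeo hB w hw j (by omega)
    rw [SimpleGraph.dist_comm (u := x j) (v := z1),
      SimpleGraph.dist_comm (u := x j) (v := w), p1, p2, hwa, hwc]
    omega
  have case2 : 2 ≤ a1 → a1 < R := by
    intro h
    obtain ⟨w, hw, hwa, hwc⟩ := hW (a1 - 1) (by omega) (by omega)
    have hne : z1 ≠ w := by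
      intro hcon
      rw [hcon] at ha1
      omega
    have := hbig w (d - a1 + 1) d hw hne (by omega) ?_
    · omega
    intro j hj1 hj2
    have p1 := profile x d hconn hgeo hB z1 hz1 j (by omega)
    have p2 := profile x d hconn hgeo hB w hw j (by omega)
    rw [SimpleGraph.dist_comm (u := x j) (v := z1),
      SimpleGraph.dist_comm (u := x j) (v := w), p1, p2, hwa, hwc]
    omega
  rcases Nat.lt_or_ge a1 2 with h | h
  · have := case1 (by omega)
    omega
  · rcases Nat.lt_or_ge a1 d with h' | h'
    · have := case1 (by omega)
      have := case2 h
      omega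
    · have := case2 h
      omega
end geo

set_option linter.unusedSectionVars false
set_option maxHeartbeats 1000000


section geo2
variable (x : ℕ → V) (d R : ℕ)

lemma caseB1_false
    (hgeo : ∀ i j : ℕ, i ≤ j → j ≤ d → G.dist (x i) (x j) = j - i)
    (hpath : ∀ v : V, ∃ j, j ≤ d ∧ v = x j)
    (p q s1 s2 : V) (hpq : p ≠ q) (hs : s1 ≠ s2)
    (h1 : G.dist s1 p = G.dist s1 q) (h2 : G.dist s2 p = G.dist s2 q) : False := by
  have hxd : ∀ i j, i ≤ d → j ≤ d → G.dist (x i) (x j) = max i j - min i j := by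
    intro i j hi hj
    rcases le_total i j with h | h
    · rw [hgeo i j h hj]; omega
    · rw [SimpleGraph.dist_comm, hgeo j i h hi]; omega
  obtain ⟨ip, hip, rfl⟩ := hpath p
  obtain ⟨iq, hiq, rfl⟩ := hpath q
  obtain ⟨i1, hi1, rfl⟩ := hpath s1
  obtain ⟨i2, hi2, rfl⟩ := hpath s2
  rw [hxd i1 ip hi1 hip, hxd i1 iq hi1 hiq] at h1
  rw [hxd i2 ip hi2 hip, hxd i2 iq hi2 hiq] at h2
  have hne1 : ip ≠ iq := fun h => hpq (by rw [h])
  have hne2 : i1 ≠ i2 := fun h => hs (by rw [h])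
  omega

lemma caseB3_false (hconn : G.Connected)
    (hgeo : ∀ i j : ℕ, i ≤ j → j ≤ d → G.dist (x i) (x j) = j - i)
    (hbis : ∀ p q : V, p ≠ q →
      (Finset.univ.filter fun w => G.dist w p = G.dist w q).card < R)
    (hB : ∀ z, (∀ j, j ≤ d → z ≠ x j) → ∀ t, 1 ≤ t → t + 1 ≤ d → ¬G.Adj z (x t))
    (hdiam : ∀ p q : V, G.dist p q ≤ d)
    (hR : 3 ≤ R) (hd : 3 * R - 4 ≤ d)
    (hU : ∀ z, (∀ i, i ≤ d → z ≠ x i) → G.dist z (x 0) + G.dist z (x d) = d + 1)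
    (z1 : V) (hz1 : ∀ i, i ≤ d → z1 ≠ x i)
    (p q s1 s2 : V) (hpq : p ≠ q) (hs : s1 ≠ s2)
    (h1 : G.dist s1 p = G.dist s1 q) (h2 : G.dist s2 p = G.dist s2 q) : False := by
  classical
  have hb1 := off_basic x d hconn hgeo hB hdiam z1 hz1
  -- U-closure
  have hUall : ∀ α, 1 ≤ α → α ≤ d →
      ∃ z, (∀ i, i ≤ d → z ≠ x i) ∧ G.dist z (x 0) = α := by
    have hdown : ∀ m, m ≤ G.dist z1 (x 0) - 1 →
        ∃ z, (∀ i, i ≤ d → z ≠ x i) ∧ G.dist z (x 0) = G.dist z1 (x 0) - m := by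
      intro m
      induction m with
      | zero => intro _; exact ⟨z1, hz1, by omega⟩
      | succ m ih =>
        intro hm
        obtain ⟨z, hz, hza⟩ := ih (by omega)
        obtain ⟨y, hadj, hy, hya⟩ := stepL x d hconn hgeo hB hdiam z hz (by omega)
        exact ⟨y, hy, by omega⟩
    have hup : ∀ m, G.dist z1 (x 0) + m ≤ d →
        ∃ z, (∀ i, i ≤ d → z ≠ x i) ∧ G.dist z (x 0) = G.dist z1 (x 0) + m := by
      intro m
      induction m with
      | zero => intro _; exact ⟨z1, hz1, by omega⟩
      | succ m ih =>
        intro hm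
        obtain ⟨z, hz, hza⟩ := ih (by omega)
        have hcz : G.dist z (x d) = d + 1 - G.dist z (x 0) := by
          have := hU z hz; omega
        obtain ⟨y, hadj, hy, hyc⟩ := stepR x d hconn hgeo hB hdiam z hz (by omega)
        have := hU y hy
        exact ⟨y, hy, by omega⟩
    intro α h1 h2
    rcases le_total α (G.dist z1 (x 0)) with h | h
    · obtain ⟨z, hz, hza⟩ := hdown (G.dist z1 (x 0) - α) (by omega)
      exact ⟨z, hz, by omega⟩
    · obtain ⟨z, hz, hza⟩ := hup (α - G.dist z1 (x 0)) (by omega)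
      exact ⟨z, hz, by omega⟩
  -- the chosen representative
  set F : ℕ → V := fun α => if h : 1 ≤ α ∧ α ≤ d then (hUall α h.1 h.2).choose else x 0
    with hF
  have hFoff : ∀ α, 1 ≤ α → α ≤ d → (∀ i, i ≤ d → F α ≠ x i) ∧ G.dist (F α) (x 0) = α := by
    intro α h1 h2
    have := (hUall α h1 h2).choose_spec
    simp only [hF, dif_pos (And.intro h1 h2)]
    exact this
  have hFuniq : ∀ z, (∀ i, i ≤ d → z ≠ x i) → z = F (G.dist z (x 0)) := by
    intro z hz
    have hbz := off_basic x d hconn hgeo hB hdiam z hz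
    obtain ⟨hoff, ha⟩ := hFoff (G.dist z (x 0)) (by omega) (by omega)
    refine off_uniq x d hgeo hbis hconn hB hR hd z _ hz hoff ha.symm ?_
    have e1 := hU z hz
    have e2 := hU _ hoff
    omega
  -- chain adjacency and distances among F's
  have hFadj : ∀ α, 1 ≤ α → α + 1 ≤ d → G.Adj (F α) (F (α + 1)) := by
    intro α h1 h2
    obtain ⟨hoff, ha⟩ := hFoff α h1 (by omega)
    have hc : G.dist (F α) (x d) = d + 1 - α := by
      have := hU _ hoff; omega
    obtain ⟨y, hadj, hy, hyc⟩ := stepR x d hconn hgeo hB hdiam (F α) hoff (by omega)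
    have hya : G.dist y (x 0) = α + 1 := by
      have := hU y hy
      have hby := off_basic x d hconn hgeo hB hdiam y hy
      omega
    have : y = F (α + 1) := by
      have := hFuniq y hy
      rw [hya] at this
      exact this
    rw [← this]
    exact hadj
  have hFdist : ∀ α β, 1 ≤ α → α ≤ β → β ≤ d → G.dist (F α) (F β) = β - α := by
    have hle : ∀ α m, 1 ≤ α → α + m ≤ d → G.dist (F α) (F (α + m)) ≤ m := by
      intro α m h1
      induction m with
      | zero => intro _; simp
      | succ m ih =>
        intro hm
        have t : G.dist (F α) (F (α+m+1)) ≤ G.dist (F α) (F (α+m)) +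
            G.dist (F (α+m)) (F (α+m+1)) := hconn.dist_triangle
        have e : G.dist (F (α+m)) (F (α+m+1)) = 1 :=
          SimpleGraph.dist_eq_one_iff_adj.mpr (hFadj (α+m) (by omega) (by omega))
        have := ih (by omega)
        have hrw : α + (m+1) = α + m + 1 := by omega
        rw [hrw]
        omega
    intro α β h1 h2 h3
    have hub : G.dist (F α) (F β) ≤ β - α := by
      have := hle α (β - α) h1 (by omega)
      have hrw : α + (β - α) = β := by omega
      rw [hrw] at this
      exact this
    have hlb : β ≤ G.dist (F β) (F α) + α := by
      have t : G.dist (F β) (x 0) ≤ G.dist (F β) (F α) + G.dist (F α) (x 0) :=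
        hconn.dist_triangle
      have e1 := (hFoff α h1 (by omega)).2
      have e2 := (hFoff β (by omega) h3).2
      omega
    rw [SimpleGraph.dist_comm] at hlb
    omega
  -- position encoding
  set pos : V → ℕ := fun v =>
    if (∀ i, i ≤ d → v ≠ x i) then 2*d + 1 - G.dist v (x 0) else G.dist (x 0) v
    with hpos
  have hpos_path : ∀ j, j ≤ d → pos (x j) = j := by
    intro j hj
    have : ¬ (∀ i, i ≤ d → x j ≠ x i) := by
      push_neg
      exact ⟨j, hj, rfl⟩
    simp only [hpos, if_neg this]
    exact hgeo 0 j (by omega) hj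
  have hpos_off : ∀ z, (∀ i, i ≤ d → z ≠ x i) → pos z = 2*d + 1 - G.dist z (x 0) := by
    intro z hz
    simp only [hpos, if_pos hz]
  have hpos_le : ∀ v, pos v ≤ 2*d := by
    intro v
    by_cases hv : ∀ i, i ≤ d → v ≠ x i
    · have := off_basic x d hconn hgeo hB hdiam v hv
      rw [hpos_off v hv]
      omega
    · push_neg at hv
      obtain ⟨i, hi, rfl⟩ := hv
      rw [hpos_path i hi]
      omega
  -- distance formula
  have key : ∀ v w : V, G.dist v w =
      min (max (pos v) (pos w) - min (pos v) (pos w))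
        (2*d + 1 - (max (pos v) (pos w) - min (pos v) (pos w))) := by
    have hxoff : ∀ (j : ℕ), j ≤ d → ∀ z, (∀ i, i ≤ d → z ≠ x i) →
        G.dist (x j) z =
          min (max (pos (x j)) (pos z) - min (pos (x j)) (pos z))
            (2*d + 1 - (max (pos (x j)) (pos z) - min (pos (x j)) (pos z))) := by
      intro j hj z hz
      have hp := profile x d hconn hgeo hB z hz j hj
      have hb := off_basic x d hconn hgeo hB hdiam z hz
      have he := hU z hz
      rw [SimpleGraph.dist_comm, hp, hpos_path j hj, hpos_off z hz]
      omega
    intro v w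
    by_cases hv : ∀ i, i ≤ d → v ≠ x i
    · by_cases hw : ∀ i, i ≤ d → w ≠ x i
      · -- both off
        have hbv := off_basic x d hconn hgeo hB hdiam v hv
        have hbw := off_basic x d hconn hgeo hB hdiam w hw
        have hv' := hFuniq v hv
        have hw' := hFuniq w hw
        have hdvw : G.dist v w =
            max (G.dist v (x 0)) (G.dist w (x 0)) -
              min (G.dist v (x 0)) (G.dist w (x 0)) := by
          rcases le_total (G.dist v (x 0)) (G.dist w (x 0)) with h | h
          · have hfd : G.dist (F (G.dist v (x 0))) (F (G.dist w (x 0))) =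
                G.dist w (x 0) - G.dist v (x 0) := hFdist _ _ (by omega) h (by omega)
            rw [← hv', ← hw'] at hfd
            omega
          · have hfd : G.dist (F (G.dist w (x 0))) (F (G.dist v (x 0))) =
                G.dist v (x 0) - G.dist w (x 0) := hFdist _ _ (by omega) h (by omega)
            rw [← hv', ← hw', SimpleGraph.dist_comm] at hfd
            omega
        rw [hpos_off v hv, hpos_off w hw, hdvw]
        omega
      · push_neg at hw
        obtain ⟨j, hj, rfl⟩ := hw
        rw [SimpleGraph.dist_comm]
        rw [hxoff j hj v hv]
        omega
    · push_neg at hv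
      obtain ⟨j, hj, rfl⟩ := hv
      by_cases hw : ∀ i, i ≤ d → w ≠ x i
      · exact hxoff j hj w hw
      · push_neg at hw
        obtain ⟨i, hi, rfl⟩ := hw
        have hxd : G.dist (x j) (x i) = max j i - min j i := by
          rcases le_total j i with h | h
          · rw [hgeo j i h hi]; omega
          · rw [SimpleGraph.dist_comm, hgeo i j h hj]; omega
        rw [hxd, hpos_path j hj, hpos_path i hi]
        omega
  -- distinct vertices have distinct positions
  have hposinj : ∀ v w : V, v ≠ w → pos v ≠ pos w := by
    intro v w hne hcon
    have := key v w
    rw [hcon] at this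
    simp only [Nat.sub_self, Nat.max_self, Nat.min_self] at this
    have h0 : G.dist v w = 0 := by omega
    exact hne ((hconn v w).dist_eq_zero_iff.mp h0)
  -- final arithmetic
  have e1 := key s1 p
  have e2 := key s1 q
  have e3 := key s2 p
  have e4 := key s2 q
  have l1 := hpos_le s1
  have l2 := hpos_le s2
  have l3 := hpos_le p
  have l4 := hpos_le q
  have n1 := hposinj s1 s2 hs
  have n2 := hposinj p q hpq
  rw [e1, e2] at h1
  rw [e3, e4] at h2
  omega
end geo2
section finsub
lemma fin_sub_val {n : ℕ} (u v : Fin n) :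
    (u - v).val = if v.val ≤ u.val then u.val - v.val else u.val + n - v.val := by
  rw [Fin.sub_def]
  rcases le_or_gt v.val u.val with h | h
  · simp only [h, if_true]
    have hu := u.isLt; have hv := v.isLt
    have h2 : (n - v.val + u.val) = (u.val - v.val) + n := by omega
    rw [h2, Nat.add_mod_right, Nat.mod_eq_of_lt (by omega)]
  · simp only [not_le.mpr h, if_false]
    have hu := u.isLt; have hv := v.isLt
    rw [Nat.mod_eq_of_lt (by omega)]
    omega
end finsub

section geo3
variable (x : ℕ → V) (d R : ℕ)

lemma caseB2_iso (hconn : G.Connected)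
    (hgeo : ∀ i j : ℕ, i ≤ j → j ≤ d → G.dist (x i) (x j) = j - i)
    (hbis : ∀ p q : V, p ≠ q →
      (Finset.univ.filter fun w => G.dist w p = G.dist w q).card < R)
    (hB : ∀ z, (∀ j, j ≤ d → z ≠ x j) → ∀ t, 1 ≤ t → t + 1 ≤ d → ¬G.Adj z (x t))
    (hdiam : ∀ p q : V, G.dist p q ≤ d)
    (hR : 3 ≤ R) (hd : 3 * R - 4 ≤ d)
    (hW : ∀ z, (∀ i, i ≤ d → z ≠ x i) → G.dist z (x 0) + G.dist z (x d) = d)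
    (z0 : V) (hz0 : ∀ i, i ≤ d → z0 ≠ x i) :
    Nonempty (G ≃g SimpleGraph.cycleGraph (2*d)) := by
  classical
  have hd5 : 5 ≤ d := by omega
  have hWall := Wclosure x d hconn hgeo hB hdiam z0 hz0 (hW z0 hz0)
  set F : ℕ → V := fun α =>
    if h : 1 ≤ α ∧ α ≤ d - 1 then (hWall α h.1 h.2).choose else x 0 with hF
  have hFoff : ∀ α, 1 ≤ α → α ≤ d - 1 → (∀ i, i ≤ d → F α ≠ x i) ∧
      G.dist (F α) (x 0) = α ∧ G.dist (F α) (x d) = d - α := by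
    intro α h1 h2
    have := (hWall α h1 h2).choose_spec
    simp only [hF, dif_pos (And.intro h1 h2)]
    exact this
  have hFuniq : ∀ z, (∀ i, i ≤ d → z ≠ x i) → z = F (G.dist z (x 0)) := by
    intro z hz
    have hbz := off_basic x d hconn hgeo hB hdiam z hz
    have hez := hW z hz
    obtain ⟨hoff, ha, hc⟩ := hFoff (G.dist z (x 0)) (by omega) (by omega)
    exact off_uniq x d hgeo hbis hconn hB hR hd z _ hz hoff ha.symm (by omega)
  have hFadj : ∀ α, 1 ≤ α → α + 1 ≤ d - 1 → G.Adj (F α) (F (α + 1)) := by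
    intro α h1 h2
    obtain ⟨hoff, ha, hc⟩ := hFoff α h1 (by omega)
    obtain ⟨y, hadj, hy, hyc⟩ := stepR x d hconn hgeo hB hdiam (F α) hoff (by omega)
    have hby := off_basic x d hconn hgeo hB hdiam y hy
    have hey := hW y hy
    have hya : G.dist y (x 0) = α + 1 := by omega
    have : y = F (α + 1) := by
      have h := hFuniq y hy
      rw [hya] at h
      exact h
    rw [← this]
    exact hadj
  have hFdist : ∀ α β, 1 ≤ α → α ≤ β → β ≤ d - 1 → G.dist (F α) (F β) = β - α := by
    have hle : ∀ α m, 1 ≤ α → α + m ≤ d - 1 → G.dist (F α) (F (α + m)) ≤ m := by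
      intro α m h1
      induction m with
      | zero => intro _; simp
      | succ m ih =>
        intro hm
        have t : G.dist (F α) (F (α+m+1)) ≤ G.dist (F α) (F (α+m)) +
            G.dist (F (α+m)) (F (α+m+1)) := hconn.dist_triangle
        have e : G.dist (F (α+m)) (F (α+m+1)) = 1 :=
          SimpleGraph.dist_eq_one_iff_adj.mpr (hFadj (α+m) (by omega) (by omega))
        have := ih (by omega)
        have hrw : α + (m+1) = α + m + 1 := by omega
        rw [hrw]
        omega
    intro α β h1 h2 h3
    have hub : G.dist (F α) (F β) ≤ β - α := by
      have := hle α (β - α) h1 (by omega)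
      have hrw : α + (β - α) = β := by omega
      rw [hrw] at this
      exact this
    have hlb : β ≤ G.dist (F β) (F α) + α := by
      have t : G.dist (F β) (x 0) ≤ G.dist (F β) (F α) + G.dist (F α) (x 0) :=
        hconn.dist_triangle
      have e1 := (hFoff α h1 (by omega)).2.1
      have e2 := (hFoff β (by omega) h3).2.1
      omega
    rw [SimpleGraph.dist_comm] at hlb
    omega
  set pos : V → ℕ := fun v =>
    if (∀ i, i ≤ d → v ≠ x i) then 2*d - G.dist v (x 0) else G.dist (x 0) v
    with hpos
  have hpos_path : ∀ j, j ≤ d → pos (x j) = j := by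
    intro j hj
    have : ¬ (∀ i, i ≤ d → x j ≠ x i) := by
      push_neg
      exact ⟨j, hj, rfl⟩
    simp only [hpos, if_neg this]
    exact hgeo 0 j (by omega) hj
  have hpos_off : ∀ z, (∀ i, i ≤ d → z ≠ x i) → pos z = 2*d - G.dist z (x 0) := by
    intro z hz
    simp only [hpos, if_pos hz]
  have hpos_off_range : ∀ z, (∀ i, i ≤ d → z ≠ x i) →
      d + 1 ≤ pos z ∧ pos z ≤ 2*d - 1 := by
    intro z hz
    have hbz := off_basic x d hconn hgeo hB hdiam z hz
    have hez := hW z hz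
    rw [hpos_off z hz]
    omega
  have hpos_lt : ∀ v, pos v < 2*d := by
    intro v
    by_cases hv : ∀ i, i ≤ d → v ≠ x i
    · have := hpos_off_range v hv
      omega
    · push_neg at hv
      obtain ⟨i, hi, rfl⟩ := hv
      rw [hpos_path i hi]
      omega
  have key : ∀ v w : V, G.dist v w =
      min (max (pos v) (pos w) - min (pos v) (pos w))
        (2*d - (max (pos v) (pos w) - min (pos v) (pos w))) := by
    have hxoff : ∀ (j : ℕ), j ≤ d → ∀ z, (∀ i, i ≤ d → z ≠ x i) →
        G.dist (x j) z =
          min (max (pos (x j)) (pos z) - min (pos (x j)) (pos z))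
            (2*d - (max (pos (x j)) (pos z) - min (pos (x j)) (pos z))) := by
      intro j hj z hz
      have hp := profile x d hconn hgeo hB z hz j hj
      have hb := off_basic x d hconn hgeo hB hdiam z hz
      have he := hW z hz
      rw [SimpleGraph.dist_comm, hp, hpos_path j hj, hpos_off z hz]
      omega
    intro v w
    by_cases hv : ∀ i, i ≤ d → v ≠ x i
    · by_cases hw : ∀ i, i ≤ d → w ≠ x i
      · have hbv := off_basic x d hconn hgeo hB hdiam v hv
        have hbw := off_basic x d hconn hgeo hB hdiam w hw
        have hev := hW v hv
        have hew := hW w hw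
        have hv' := hFuniq v hv
        have hw' := hFuniq w hw
        have hdvw : G.dist v w =
            max (G.dist v (x 0)) (G.dist w (x 0)) -
              min (G.dist v (x 0)) (G.dist w (x 0)) := by
          rcases le_total (G.dist v (x 0)) (G.dist w (x 0)) with h | h
          · have hfd : G.dist (F (G.dist v (x 0))) (F (G.dist w (x 0))) =
                G.dist w (x 0) - G.dist v (x 0) := hFdist _ _ (by omega) h (by omega)
            rw [← hv', ← hw'] at hfd
            omega
          · have hfd : G.dist (F (G.dist w (x 0))) (F (G.dist v (x 0))) =
                G.dist v (x 0) - G.dist w (x 0) := hFdist _ _ (by omega) h (by omega)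
            rw [← hv', ← hw', SimpleGraph.dist_comm] at hfd
            omega
        rw [hpos_off v hv, hpos_off w hw, hdvw]
        omega
      · push_neg at hw
        obtain ⟨j, hj, rfl⟩ := hw
        rw [SimpleGraph.dist_comm]
        rw [hxoff j hj v hv]
        omega
    · push_neg at hv
      obtain ⟨j, hj, rfl⟩ := hv
      by_cases hw : ∀ i, i ≤ d → w ≠ x i
      · exact hxoff j hj w hw
      · push_neg at hw
        obtain ⟨i, hi, rfl⟩ := hw
        have hxd2 : G.dist (x j) (x i) = max j i - min j i := by
          rcases le_total j i with h | h
          · rw [hgeo j i h hi]; omega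
          · rw [SimpleGraph.dist_comm, hgeo i j h hj]; omega
        rw [hxd2, hpos_path j hj, hpos_path i hi]
        omega
  have hadj_iff : ∀ v w : V, G.Adj v w ↔
      min (max (pos v) (pos w) - min (pos v) (pos w))
        (2*d - (max (pos v) (pos w) - min (pos v) (pos w))) = 1 := by
    intro v w
    rw [← SimpleGraph.dist_eq_one_iff_adj, key v w]
  -- build the equivalence
  refine ⟨⟨⟨fun v => ⟨pos v, hpos_lt v⟩,
    fun m => if m.val ≤ d then x m.val else F (2*d - m.val), ?_, ?_⟩, ?_⟩⟩
  · -- left inverse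
    intro v
    by_cases hv : ∀ i, i ≤ d → v ≠ x i
    · have hr := hpos_off_range v hv
      have hbv := off_basic x d hconn hgeo hB hdiam v hv
      simp only []
      rw [if_neg (by omega)]
      rw [hpos_off v hv]
      have harw : 2*d - (2*d - G.dist v (x 0)) = G.dist v (x 0) := by omega
      rw [harw]
      exact (hFuniq v hv).symm
    · push_neg at hv
      obtain ⟨j, hj, rfl⟩ := hv
      simp only []
      rw [hpos_path j hj, if_pos hj]
  · -- right inverse
    intro m
    have hmlt := m.isLt
    by_cases hm : m.val ≤ d
    · simp only [if_pos hm]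
      apply Fin.ext
      simp only []
      exact hpos_path m.val hm
    · simp only [if_neg hm]
      apply Fin.ext
      simp only []
      push_neg at hm
      obtain ⟨hoff, ha, hc⟩ := hFoff (2*d - m.val) (by omega) (by omega)
      rw [hpos_off _ hoff, ha]
      omega
  · -- map_rel_iff
    intro a b
    simp only [Equiv.coe_fn_mk]
    rw [SimpleGraph.cycleGraph_adj', fin_sub_val, fin_sub_val]
    simp only []
    rw [hadj_iff a b]
    have h1 := hpos_lt a
    have h2 := hpos_lt b
    split_ifs <;> omega
end geo3

end Aux

/-- if `G` is a finite simple connected graph with `res(G) ≥ 3` which is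
not isomorphic to an even cycle, then its diameter satisfies `d(G) ≤ 3·res(G) - 5`. -/
theorem stmt17 {V : Type*} [Fintype V] [DecidableEq V] (G : SimpleGraph V)
    (hconn : G.Connected) (hres : 3 ≤ resolvingNumber G)
    (hcyc : ¬ ∃ n : ℕ, 4 ≤ n ∧ Even n ∧ Nonempty (G ≃g SimpleGraph.cycleGraph n)) :
    G.diam ≤ 3 * resolvingNumber G - 5 := by
  by_contra hle
  push_neg at hle
  haveI hVne : Nonempty V := by
    by_contra hV
    rw [not_nonempty_iff] at hV
    have h0 : 0 ∈ {k | ∀ S : Finset V, S.card = k → IsResolvingSet G ↑S} :=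
      fun S _ a b _ => (hV.elim a)
    have h1 := Nat.sInf_le h0
    have h2 : resolvingNumber G = 0 := by
      unfold resolvingNumber
      omega
    omega
  set R := resolvingNumber G with hRdef
  set d := G.diam with hddef
  have hR : 3 ≤ R := hres
  have hd : 3 * R - 4 ≤ d := by omega
  have hdne : G.ediam ≠ ⊤ := SimpleGraph.ediam_ne_top_of_diam_ne_zero (by omega)
  have hdiam : ∀ p q : V, G.dist p q ≤ d := fun p q => SimpleGraph.dist_le_diam hdne
  obtain ⟨u, v, huv⟩ := SimpleGraph.exists_dist_eq_diam (G := G)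
  obtain ⟨x, hx0, hxv, hgeo0⟩ := exists_geodesic hconn u v
  rw [huv] at hgeo0
  have hbis : ∀ p q : V, p ≠ q →
      (Finset.univ.filter fun w => G.dist w p = G.dist w q).card < R :=
    fun p q h => bisector_lt_res h
  by_cases hA : ∃ z t, (∀ j, j ≤ d → z ≠ x j) ∧ 1 ≤ t ∧ t + 1 ≤ d ∧ G.Adj z (x t)
  · obtain ⟨z, t, hz, ht1, ht2, hadj⟩ := hA
    exact caseA_false hconn x d R hgeo0 hbis hR hd z hz t ht1 ht2 hadj
  · have hB : ∀ z, (∀ j, j ≤ d → z ≠ x j) → ∀ t, 1 ≤ t → t + 1 ≤ d → ¬G.Adj z (x t) := by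
      intro z hz t h1 h2 hadj
      exact hA ⟨z, t, hz, h1, h2, hadj⟩
    obtain ⟨p, q, s1, s2, hpq, hs, heq1, heq2⟩ := exists_two_equidistant hres
    by_cases hOff : ∃ z, ∀ i, i ≤ d → z ≠ x i
    · obtain ⟨zz, hzz⟩ := hOff
      by_cases hWex : ∃ z, (∀ i, i ≤ d → z ≠ x i) ∧ G.dist z (x 0) + G.dist z (x d) = d
      · obtain ⟨z0, hz0, he0⟩ := hWex
        by_cases hUex : ∃ z, (∀ i, i ≤ d → z ≠ x i) ∧
            G.dist z (x 0) + G.dist z (x d) = d + 1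
        · obtain ⟨z1, hz1, he1⟩ := hUex
          exact coexist_false x d R hconn hgeo0 hbis hB hdiam hR hd z0 hz0 he0 z1 hz1 he1
        · have hW : ∀ z, (∀ i, i ≤ d → z ≠ x i) →
              G.dist z (x 0) + G.dist z (x d) = d := by
            intro z hz
            have hb := off_basic x d hconn hgeo0 hB hdiam z hz
            rcases Nat.lt_or_ge (G.dist z (x 0) + G.dist z (x d)) (d+1) with h | h
            · omega
            · exfalso; exact hUex ⟨z, hz, by omega⟩
          obtain ⟨iso⟩ := caseB2_iso x d R hconn hgeo0 hbis hB hdiam hR hd hW z0 hz0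
          exact hcyc ⟨2*d, by omega, ⟨d, by omega⟩, ⟨iso⟩⟩
      · have hU : ∀ z, (∀ i, i ≤ d → z ≠ x i) →
            G.dist z (x 0) + G.dist z (x d) = d + 1 := by
          intro z hz
          have hb := off_basic x d hconn hgeo0 hB hdiam z hz
          rcases Nat.lt_or_ge (G.dist z (x 0) + G.dist z (x d)) (d+1) with h | h
          · exfalso; exact hWex ⟨z, hz, by omega⟩
          · omega
        exact caseB3_false x d R hconn hgeo0 hbis hB hdiam hR hd hU zz hzz
          p q s1 s2 hpq hs heq1 heq2
    · have hpath : ∀ w : V, ∃ j, j ≤ d ∧ w = x j := by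
        intro w
        by_contra hcon
        push_neg at hcon
        exact hOff ⟨w, fun i hi => hcon i hi⟩
      exact caseB1_false x d hgeo0 hpath p q s1 s2 hpq hs heq1 heq2
end

section
/- For every integer a ≥ 4, every finite simple connected graph G with res(G) = a has order at most (3a − 5)^a + a; in particular, for every a ≥ 4 the set of connected graphs with resolving number a is finite (up to isomorphism). -/
set_option linter.unusedSectionVars false
namespace Stmt18Aux

open SimpleGraph Finset

variable {V : Type*} [Fintype V] [DecidableEq V] {G : SimpleGraph V}

lemma dist_getVert_left (hc : G.Connected) {x y : V} (p : G.Walk x y) :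
    ∀ i, G.dist x (p.getVert i) ≤ i := by
  intro i
  induction i with
  | zero => simp [SimpleGraph.Walk.getVert_zero, SimpleGraph.dist_self]
  | succ n ih =>
    by_cases h : n < p.length
    · have hadj := p.adj_getVert_succ h
      have h1 : G.dist (p.getVert n) (p.getVert (n+1)) = 1 :=
        SimpleGraph.dist_eq_one_iff_adj.mpr hadj
      have h2 : G.dist x (p.getVert (n+1)) ≤
          G.dist x (p.getVert n) + G.dist (p.getVert n) (p.getVert (n+1)) :=
        hc.dist_triangle
      omega
    · push_neg at h
      rw [p.getVert_of_length_le (le_trans h (Nat.le_succ n))]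
      have h2 : G.dist x y ≤ p.length := SimpleGraph.dist_le p
      omega

lemma dist_getVert_right {x y : V} (p : G.Walk x y) :
    ∀ i, G.dist (p.getVert i) y ≤ p.length - i := by
  induction p with
  | nil => intro i; simp [SimpleGraph.Walk.getVert, SimpleGraph.dist_self]
  | @cons u v w h q ih =>
    intro i
    cases i with
    | zero =>
      have := SimpleGraph.dist_le (SimpleGraph.Walk.cons h q)
      simpa using this
    | succ n =>
      rw [SimpleGraph.Walk.getVert_cons_succ]
      have := ih n
      have hl : (SimpleGraph.Walk.cons h q).length = q.length + 1 := by simp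
      omega

lemma geo (hc : G.Connected) (x y : V) :
    ∃ γ : ℕ → V, γ 0 = x ∧ (∀ i, G.dist x y ≤ i → γ i = y) ∧
      (∀ i, i < G.dist x y → G.Adj (γ i) (γ (i+1))) ∧
      (∀ i, i ≤ G.dist x y → G.dist x (γ i) = i ∧ G.dist (γ i) y = G.dist x y - i) ∧
      (∀ i j, i ≤ j → j ≤ G.dist x y → G.dist (γ i) (γ j) = j - i) := by
  obtain ⟨p, hp⟩ := hc.exists_walk_length_eq_dist x y
  have hd : ∀ i, i ≤ G.dist x y → G.dist x (p.getVert i) = i ∧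
      G.dist (p.getVert i) y = G.dist x y - i := by
    intro i hi
    have h1 := dist_getVert_left hc p i
    have h2 := dist_getVert_right p i
    rw [hp] at h2
    have h3 : G.dist x y ≤ G.dist x (p.getVert i) + G.dist (p.getVert i) y :=
      hc.dist_triangle
    omega
  have hadj : ∀ i, i < G.dist x y → G.Adj (p.getVert i) (p.getVert (i+1)) := by
    intro i hi
    exact p.adj_getVert_succ (by omega)
  refine ⟨p.getVert, p.getVert_zero, ?_, hadj, hd, ?_⟩
  · intro i hi; exact p.getVert_of_length_le (by omega)
  · intro i j hij hj
    have hub : ∀ k i', i' + k ≤ G.dist x y →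
        G.dist (p.getVert i') (p.getVert (i'+k)) ≤ k := by
      intro k
      induction k with
      | zero => intro i' _; simp [SimpleGraph.dist_self]
      | succ n ih =>
        intro i' hi'
        have h1 := ih i' (by omega)
        have h2 : G.dist (p.getVert (i'+n)) (p.getVert (i'+n+1)) = 1 :=
          SimpleGraph.dist_eq_one_iff_adj.mpr (hadj (i'+n) (by omega))
        have h3 : G.dist (p.getVert i') (p.getVert (i'+n+1)) ≤
            G.dist (p.getVert i') (p.getVert (i'+n)) +
            G.dist (p.getVert (i'+n)) (p.getVert (i'+n+1)) := hc.dist_triangle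
        have : i' + (n+1) = i' + n + 1 := by omega
        rw [this]
        omega
    have h1 : G.dist (p.getVert i) (p.getVert (i + (j-i))) ≤ j - i := hub (j-i) i (by omega)
    have h2 : i + (j - i) = j := by omega
    rw [h2] at h1
    have h3 : G.dist x (p.getVert j) ≤ G.dist x (p.getVert i) +
        G.dist (p.getVert i) (p.getVert j) := hc.dist_triangle
    have h4 := (hd i (by omega)).1
    have h5 := (hd j hj).1
    omega

lemma backstep (hc : G.Connected) {x v : V} {k : ℕ} (h : G.dist x v = k + 1) :
    ∃ c, G.Adj c v ∧ G.dist x c = k := by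
  obtain ⟨γ, hγ0, hγe, hγadj, hγd, _⟩ := geo hc x v
  refine ⟨γ k, ?_, (hγd k (by omega)).1⟩
  have h1 := hγadj k (by omega)
  rwa [hγe (k+1) (by omega)] at h1

lemma hit (hc : G.Connected) {u w : V} {k : ℕ} (hk : k ≤ G.dist u w) :
    ∃ z, G.dist u z = k ∧ G.dist z w = G.dist u w - k := by
  obtain ⟨γ, hγ0, hγe, hγadj, hγd, _⟩ := geo hc u w
  exact ⟨γ k, (hγd k hk).1, (hγd k hk).2⟩

lemma three_of_card {s : Finset V} (h : 3 ≤ s.card) :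
    ∃ a ∈ s, ∃ b ∈ s, ∃ c ∈ s, a ≠ b ∧ a ≠ c ∧ b ≠ c := by
  obtain ⟨a, ha⟩ := Finset.card_pos.mp (show 0 < s.card by omega)
  have h1 : (s.erase a).card = s.card - 1 := Finset.card_erase_of_mem ha
  obtain ⟨b, hb⟩ := Finset.card_pos.mp (show 0 < (s.erase a).card by omega)
  have hb' := Finset.mem_erase.mp hb
  have h2 : ((s.erase a).erase b).card = (s.erase a).card - 1 := Finset.card_erase_of_mem hb
  obtain ⟨c, hcc⟩ := Finset.card_pos.mp (show 0 < ((s.erase a).erase b).card by omega)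
  have hc' := Finset.mem_erase.mp hcc
  have hc'' := Finset.mem_erase.mp hc'.2
  exact ⟨a, ha, b, hb'.2, c, hc''.2, (hb'.1).symm, (hc''.1).symm, (hc'.1).symm⟩


noncomputable def eqd (G : SimpleGraph V) (x y : V) : Finset V :=
  Finset.univ.filter (fun u => G.dist u x = G.dist u y)

lemma mem_eqd {G : SimpleGraph V} {x y u : V} :
    u ∈ eqd G x y ↔ G.dist u x = G.dist u y := by
  simp [eqd]

noncomputable def sph (G : SimpleGraph V) (v : V) (r : ℕ) : Finset V :=
  Finset.univ.filter (fun w => G.dist v w = r)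

lemma mem_sph {G : SimpleGraph V} {v w : V} {r : ℕ} :
    w ∈ sph G v r ↔ G.dist v w = r := by
  simp [sph]

section Deg2

variable (hc : G.Connected)
variable (hdeg2 : ∀ v t1 t2 t3 : V, G.Adj v t1 → G.Adj v t2 → G.Adj v t3 →
  t1 = t2 ∨ t1 = t3 ∨ t2 = t3)

include hc hdeg2

lemma sph_card (v : V) : ∀ r, 1 ≤ r → (sph G v r).card ≤ 2 := by
  intro r
  induction r with
  | zero => omega
  | succ n ih =>
    intro _
    rcases Nat.eq_zero_or_pos n with h0 | hn
    · subst h0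
      by_contra hgt
      push_neg at hgt
      obtain ⟨a, ha, b, hb, c, hcc, hab, hac, hbc⟩ := three_of_card (s := sph G v (0+1)) (by omega)
      rw [mem_sph] at ha hb hcc
      have haj := SimpleGraph.dist_eq_one_iff_adj.mp ha
      have hbj := SimpleGraph.dist_eq_one_iff_adj.mp hb
      have hcj := SimpleGraph.dist_eq_one_iff_adj.mp hcc
      rcases hdeg2 v a b c haj hbj hcj with h | h | h
      · exact hab h
      · exact hac h
      · exact hbc h
    · have hmap : ∀ w ∈ sph G v (n+1), ∃ c, G.Adj c w ∧ G.dist v c = n := by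
        intro w hw
        exact backstep hc (mem_sph.mp hw)
      choose f hf1 hf2 using hmap
      classical
      have hinj : (sph G v (n+1)).card ≤ (sph G v n).card := by
        apply Finset.card_le_card_of_injOn
          (fun w => if h : w ∈ sph G v (n+1) then f w h else w)
        · intro w hw
          have hw' : w ∈ sph G v (n+1) := hw
          simp only [dif_pos hw']
          exact mem_sph.mpr (hf2 w hw)
        · intro w1 h1 w2 h2 heq
          simp only [Finset.mem_coe] at h1 h2
          simp only [dif_pos h1, dif_pos h2] at heq
          have hzw1 : G.Adj (f w1 h1) w1 := hf1 w1 h1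
          have hzw2 : G.Adj (f w1 h1) w2 := by rw [heq]; exact hf1 w2 h2
          have hzd : G.dist v (f w1 h1) = n := hf2 w1 h1
          obtain ⟨z', hz'adj, hz'd⟩ := backstep hc
            (show G.dist v (f w1 h1) = (n-1)+1 by omega)
          have hzw1' := hzw1
          have hzw2' := hzw2
          have hd1 : G.dist v w1 = n + 1 := mem_sph.mp h1
          have hd2 : G.dist v w2 = n + 1 := mem_sph.mp h2
          rcases hdeg2 (f w1 h1) z' w1 w2 hz'adj.symm hzw1 hzw2 with h | h | h
          · rw [h] at hz'd; omega
          · rw [h] at hz'd; omega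
          · exact h
      exact le_trans hinj (ih hn)

lemma sphere_full {x y u w : V} {r : ℕ} (hxy : x ≠ y) (hux : G.dist u x = r)
    (huy : G.dist u y = r) (hr : 1 ≤ r) (huw : G.dist u w = r) : w = x ∨ w = y := by
  by_contra hcon
  push_neg at hcon
  obtain ⟨hwx, hwy⟩ := hcon
  have hsub : ({x, y, w} : Finset V) ⊆ sph G u r := by
    intro z hz
    simp only [Finset.mem_insert, Finset.mem_singleton] at hz
    rcases hz with rfl | rfl | rfl
    · exact mem_sph.mpr hux
    · exact mem_sph.mpr huy
    · exact mem_sph.mpr huw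
  have hcard : ({x, y, w} : Finset V).card = 3 :=
    Finset.card_eq_three.mpr ⟨x, y, w, hxy, Ne.symm hwx, Ne.symm hwy, rfl⟩
  have := Finset.card_le_card hsub
  have h2 := sph_card hc hdeg2 u r hr
  omega

lemma claimZ {x y : V} (hxy : x ≠ y) :
    ∀ r : ℕ, ∀ v c : V, G.Adj v c → G.dist v x = r → G.dist v y = r →
      G.dist c x = r - 1 → G.dist c y = r - 1 → False := by
  intro r
  induction r with
  | zero =>
    intro v c _ hvx hvy _ _
    have h1 : v = x := hc.dist_eq_zero_iff.mp hvx
    have h2 : v = y := hc.dist_eq_zero_iff.mp hvy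
    exact hxy (h1 ▸ h2)
  | succ r ih =>
    intro v c hvc hvx hvy hcx hcy
    rcases Nat.eq_zero_or_pos r with hr0 | hrpos
    · subst hr0
      have h1 : c = x := hc.dist_eq_zero_iff.mp (by simpa using hcx)
      have h2 : c = y := hc.dist_eq_zero_iff.mp (by simpa using hcy)
      exact hxy (h1 ▸ h2)
    · have hcx' : G.dist c x = r := by omega
      have hcy' : G.dist c y = r := by omega
      obtain ⟨c1, hc1adj, hc1⟩ := backstep hc
        (show G.dist x c = (r-1)+1 by rw [SimpleGraph.dist_comm]; omega)
      obtain ⟨c2, hc2adj, hc2⟩ := backstep hc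
        (show G.dist y c = (r-1)+1 by rw [SimpleGraph.dist_comm]; omega)
      have hne1 : v ≠ c1 := by
        intro h
        rw [← h, SimpleGraph.dist_comm] at hc1
        omega
      have hne2 : v ≠ c2 := by
        intro h
        rw [← h, SimpleGraph.dist_comm] at hc2
        omega
      rcases hdeg2 c v c1 c2 hvc.symm hc1adj.symm hc2adj.symm with h | h | h
      · exact hne1 h
      · exact hne2 h
      · refine ih c c1 hc1adj.symm hcx' hcy' ?_ ?_
        · rw [SimpleGraph.dist_comm]; exact hc1
        · rw [h, SimpleGraph.dist_comm]; exact hc2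

lemma tri_aux {x y u u' : V} {r r' : ℕ} (hxy : x ≠ y)
    (hux : G.dist u x = r) (huy : G.dist u y = r)
    (hux' : G.dist u' x = r') (huy' : G.dist u' y = r')
    (hr : 1 ≤ r) (hr' : 1 ≤ r') (hle : r ≤ G.dist u u') :
    G.dist u u' = r + r' := by
  rcases Nat.eq_or_lt_of_le hle with heq | hlt
  · exfalso
    rcases sphere_full hc hdeg2 hxy hux huy hr heq.symm with h | h
    · rw [h] at hux'
      rw [SimpleGraph.dist_self] at hux'
      omega
    · rw [h] at huy'
      rw [SimpleGraph.dist_self] at huy'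
      omega
  · obtain ⟨z, hz1, hz2⟩ := hit hc (show r ≤ G.dist u u' by omega)
    rcases sphere_full hc hdeg2 hxy hux huy hr hz1 with h | h
    · subst h
      rw [SimpleGraph.dist_comm] at hux'
      omega
    · subst h
      rw [SimpleGraph.dist_comm] at huy'
      omega

lemma tri {x y u u' : V} {r r' : ℕ} (hxy : x ≠ y)
    (hux : G.dist u x = r) (huy : G.dist u y = r)
    (hux' : G.dist u' x = r') (huy' : G.dist u' y = r')
    (hr : 1 ≤ r) (hr' : 1 ≤ r') :
    G.dist u u' = r + r' ∨ (G.dist u u' < r ∧ G.dist u u' < r') := by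
  by_cases h : G.dist u u' < r ∧ G.dist u u' < r'
  · exact Or.inr h
  · left
    rcases not_and_or.mp h with h1 | h1
    · exact tri_aux hc hdeg2 hxy hux huy hux' huy' hr hr' (by omega)
    · have := tri_aux hc hdeg2 hxy hux' huy' hux huy hr' hr
        (by rw [SimpleGraph.dist_comm]; omega)
      rw [SimpleGraph.dist_comm] at this
      omega

lemma nested_core {x y u u' : V} {r r' t : ℕ} (γ : ℕ → V) (hxy : x ≠ y)
    (hux : G.dist u x = r) (huy : G.dist u y = r)
    (hux' : G.dist u' x = r') (huy' : G.dist u' y = r')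
    (ht1 : t < r) (ht2 : t < r') (ht0 : 1 ≤ t)
    (hγ0 : γ 0 = u)
    (hγd : ∀ s, s ≤ t → G.dist u (γ s) = s ∧ G.dist (γ s) u' = t - s)
    (hγadj : ∀ s, s < t → G.Adj (γ s) (γ (s+1)))
    (h1 : G.dist (γ 1) x = r - 1) : False := by
  have hR : ∀ s, s + 1 ≤ t → G.dist (γ s) x = r - s ∧ G.dist (γ (s+1)) x = r - (s+1) := by
    intro s
    induction s with
    | zero =>
      intro _
      constructor
      · rw [hγ0]; simpa using hux
      · simpa using h1
    | succ n ih =>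
      intro h
      obtain ⟨hn, hn1⟩ := ih (by omega)
      refine ⟨hn1, ?_⟩
      obtain ⟨c, hcadj, hcx⟩ := backstep hc
        (show G.dist x (γ (n+1)) = (r - (n+2)) + 1 by rw [SimpleGraph.dist_comm]; omega)
      have hadj1 : G.Adj (γ (n+1)) (γ n) := (hγadj n (by omega)).symm
      have hadj2 : G.Adj (γ (n+1)) (γ (n+2)) := hγadj (n+1) (by omega)
      have hnene : γ n ≠ γ (n+2) := by
        intro h'
        have d1 := (hγd n (by omega)).1
        have d2 := (hγd (n+2) (by omega)).1
        rw [h'] at d1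
        omega
      rcases hdeg2 (γ (n+1)) c (γ n) (γ (n+2)) hcadj.symm hadj1 hadj2 with h' | h' | h'
      · rw [h', SimpleGraph.dist_comm] at hcx
        omega
      · rw [h', SimpleGraph.dist_comm] at hcx
        rw [show n+1+1 = n+2 from by omega]
        exact hcx
      · exact absurd h' hnene
  have hγt : γ t = u' := by
    have := (hγd t le_rfl).2
    simp only [Nat.sub_self] at this
    exact hc.dist_eq_zero_iff.mp this
  have hφt : G.dist u' x = r - t := by
    have := (hR (t-1) (by omega)).2
    have he : t - 1 + 1 = t := by omega
    rw [he, hγt] at this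
    omega
  have hψa : r ≤ 1 + G.dist (γ 1) y := by
    have h3 : G.dist u y ≤ G.dist u (γ 1) + G.dist (γ 1) y := hc.dist_triangle
    have h4 := (hγd 1 ht0).1
    omega
  have hψb : G.dist (γ 1) y ≤ (t - 1) + r' := by
    have h3 : G.dist (γ 1) y ≤ G.dist (γ 1) u' + G.dist u' y := hc.dist_triangle
    have h4 := (hγd 1 ht0).2
    omega
  have hψ1 : G.dist (γ 1) y = r - 1 := by omega
  have hadj01 : G.Adj u (γ 1) := by
    have := hγadj 0 (by omega)
    rwa [hγ0] at this
  exact claimZ hc hdeg2 hxy r u (γ 1) hadj01 hux huy h1 hψ1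

lemma nestkill {x y u u' : V} {r r' : ℕ} (hxy : x ≠ y) (hne : u ≠ u')
    (hux : G.dist u x = r) (huy : G.dist u y = r)
    (hux' : G.dist u' x = r') (huy' : G.dist u' y = r')
    (h1 : G.dist u u' < r) (h2 : G.dist u u' < r') : False := by
  have hr1 : 1 ≤ r := by omega
  obtain ⟨γ, hγ0, hγe, hγadj, hγd, hγij⟩ := geo hc u u'
  have ht0 : 1 ≤ G.dist u u' := hc.pos_dist_of_ne hne
  obtain ⟨gx, hgxadj, hgx⟩ := backstep hc
    (show G.dist x u = (r-1)+1 by rw [SimpleGraph.dist_comm]; omega)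
  obtain ⟨gy, hgyadj, hgy⟩ := backstep hc
    (show G.dist y u = (r-1)+1 by rw [SimpleGraph.dist_comm]; omega)
  have hadj01 : G.Adj u (γ 1) := by
    have := hγadj 0 (by omega)
    rwa [hγ0] at this
  rcases hdeg2 u (γ 1) gx gy hadj01 hgxadj.symm hgyadj.symm with h | h | h
  · exact nested_core hc hdeg2 γ hxy hux huy hux' huy' h1 h2 ht0 hγ0 hγd hγadj
      (by rw [h, SimpleGraph.dist_comm]; exact hgx)
  · exact nested_core hc hdeg2 γ hxy.symm huy hux huy' hux' h1 h2 ht0 hγ0 hγd hγadj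
      (by rw [h, SimpleGraph.dist_comm]; exact hgy)
  · refine claimZ hc hdeg2 hxy r u gx hgxadj.symm hux huy ?_ ?_
    · rw [SimpleGraph.dist_comm]; exact hgx
    · rw [h, SimpleGraph.dist_comm]; exact hgy

lemma mkill {p q w1 w2 w3 : V} (hpq : p ≠ q)
    (h12 : w1 ≠ w2) (h13 : w1 ≠ w3) (h23 : w2 ≠ w3)
    (e1 : G.dist w1 p = G.dist w1 q) (e2 : G.dist w2 p = G.dist w2 q)
    (e3 : G.dist w3 p = G.dist w3 q) : False := by
  have hr1 : 1 ≤ G.dist w1 p := by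
    rcases Nat.eq_zero_or_pos (G.dist w1 p) with h | h
    · exfalso
      have ha : w1 = p := hc.dist_eq_zero_iff.mp h
      have hb : w1 = q := hc.dist_eq_zero_iff.mp (by omega)
      exact hpq (ha ▸ hb)
    · omega
  have hr2 : 1 ≤ G.dist w2 p := by
    rcases Nat.eq_zero_or_pos (G.dist w2 p) with h | h
    · exfalso
      have ha : w2 = p := hc.dist_eq_zero_iff.mp h
      have hb : w2 = q := hc.dist_eq_zero_iff.mp (by omega)
      exact hpq (ha ▸ hb)
    · omega
  have hr3 : 1 ≤ G.dist w3 p := by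
    rcases Nat.eq_zero_or_pos (G.dist w3 p) with h | h
    · exfalso
      have ha : w3 = p := hc.dist_eq_zero_iff.mp h
      have hb : w3 = q := hc.dist_eq_zero_iff.mp (by omega)
      exact hpq (ha ▸ hb)
    · omega
  have s12 : G.dist w1 w2 = G.dist w1 p + G.dist w2 p := by
    rcases tri hc hdeg2 hpq rfl e1.symm rfl e2.symm hr1 hr2 with h | ⟨ha, hb⟩
    · exact h
    · exact (nestkill hc hdeg2 hpq h12 rfl e1.symm rfl e2.symm ha hb).elim
  have s13 : G.dist w1 w3 = G.dist w1 p + G.dist w3 p := by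
    rcases tri hc hdeg2 hpq rfl e1.symm rfl e3.symm hr1 hr3 with h | ⟨ha, hb⟩
    · exact h
    · exact (nestkill hc hdeg2 hpq h13 rfl e1.symm rfl e3.symm ha hb).elim
  have s23 : G.dist w2 w3 = G.dist w2 p + G.dist w3 p := by
    rcases tri hc hdeg2 hpq rfl e2.symm rfl e3.symm hr2 hr3 with h | ⟨ha, hb⟩
    · exact h
    · exact (nestkill hc hdeg2 hpq h23 rfl e2.symm rfl e3.symm ha hb).elim
  obtain ⟨c1, hc1adj, hc1⟩ := backstep hc
    (show G.dist w1 p = (G.dist w1 p - 1) + 1 by omega)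
  obtain ⟨c2, hc2adj, hc2⟩ := backstep hc
    (show G.dist w2 p = (G.dist w2 p - 1) + 1 by omega)
  obtain ⟨c3, hc3adj, hc3⟩ := backstep hc
    (show G.dist w3 p = (G.dist w3 p - 1) + 1 by omega)
  rcases hdeg2 p c1 c2 c3 hc1adj.symm hc2adj.symm hc3adj.symm with h | h | h
  · have htr : G.dist w1 w2 ≤ G.dist w1 c1 + G.dist c1 w2 := hc.dist_triangle
    rw [h] at htr hc1
    have hcc : G.dist c2 w2 = G.dist w2 p - 1 := by rw [SimpleGraph.dist_comm]; exact hc2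
    omega
  · have htr : G.dist w1 w3 ≤ G.dist w1 c1 + G.dist c1 w3 := hc.dist_triangle
    rw [h] at htr hc1
    have hcc : G.dist c3 w3 = G.dist w3 p - 1 := by rw [SimpleGraph.dist_comm]; exact hc3
    omega
  · have htr : G.dist w2 w3 ≤ G.dist w2 c2 + G.dist c2 w3 := hc.dist_triangle
    rw [h] at htr hc2
    have hcc : G.dist c3 w3 = G.dist w3 p - 1 := by rw [SimpleGraph.dist_comm]; exact hc3
    omega

end Deg2

lemma steps {D : ℕ} (hD : 1 ≤ D) (g : ℕ → ℕ)
    (hne1 : ∀ i, i < D → g i ≠ g (i+1))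
    (hne2 : ∀ i, i + 2 ≤ D → g i ≠ g (i+2))
    (hlip : ∀ i, i < D → g (i+1) ≤ g i + 1 ∧ g i ≤ g (i+1) + 1) :
    g D = g 0 + D ∨ g 0 = g D + D := by
  have hfirst : g 1 = g 0 + 1 ∨ g 0 = g 1 + 1 := by
    have h1 : g (0+1) ≤ g 0 + 1 ∧ g 0 ≤ g (0+1) + 1 := hlip 0 hD
    have h2 : g 0 ≠ g (0+1) := hne1 0 hD
    simp only [Nat.zero_add] at h1 h2
    omega
  rcases hfirst with h | h
  · left
    have hstep : ∀ i, i < D → g (i+1) = g i + 1 := by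
      intro i
      induction i with
      | zero => intro _; exact h
      | succ n ih =>
        intro hn
        have h1 := ih (by omega)
        have h2 := hlip (n+1) hn
        have h3 := hne1 (n+1) hn
        have h4 : g n ≠ g (n+1+1) := hne2 n (by omega)
        omega
    have htot : ∀ i, i ≤ D → g i = g 0 + i := by
      intro i
      induction i with
      | zero => intro _; omega
      | succ n ih =>
        intro hn
        have h1 := hstep n (by omega)
        have h2 := ih (by omega)
        omega
    exact htot D le_rfl
  · right
    have hstep : ∀ i, i < D → g i = g (i+1) + 1 := by
      intro i
      induction i with
      | zero => intro _; exact h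
      | succ n ih =>
        intro hn
        have h1 := ih (by omega)
        have h2 := hlip (n+1) hn
        have h3 := hne1 (n+1) hn
        have h4 : g n ≠ g (n+1+1) := hne2 n (by omega)
        omega
    have htot : ∀ i, i ≤ D → g 0 = g i + i := by
      intro i
      induction i with
      | zero => intro _; omega
      | succ n ih =>
        intro hn
        have h1 := hstep n (by omega)
        have h2 := ih (by omega)
        omega
    exact htot D le_rfl

end Stmt18Aux

open SimpleGraph Finset Stmt18Aux in
/-- for every integer `a ≥ 4`, every finite simple connected graph with
resolving number `a` has order at most `(3a - 5)^a + a`; hence the set of connected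
graphs with resolving number `a` is finite up to isomorphism. -/
theorem stmt18 {V : Type*} [Fintype V] [DecidableEq V] (G : SimpleGraph V)
    (hconn : G.Connected) (a : ℕ) (ha : 4 ≤ a) (hres : resolvingNumber G = a) :
    Fintype.card V ≤ (3 * a - 5) ^ a + a := by
  classical
  have hsinf : sInf {k | ∀ S : Finset V, S.card = k → IsResolvingSet G ↑S} = a := hres
  have hAne : {k | ∀ S : Finset V, S.card = k → IsResolvingSet G ↑S}.Nonempty := by
    refine ⟨Fintype.card V + 1, ?_⟩
    intro S hS
    exfalso
    have := Finset.card_le_univ S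
    omega
  have hres_a : ∀ S : Finset V, S.card = a → IsResolvingSet G ↑S := by
    have hmem := Nat.sInf_mem hAne
    rw [hsinf] at hmem
    exact hmem
  have hM : ∀ x y : V, x ≠ y → (eqd G x y).card ≤ a - 1 := by
    intro x y hxy
    by_contra hbig
    push_neg at hbig
    obtain ⟨T, hTs, hTc⟩ := Finset.exists_subset_card_eq (s := eqd G x y) (n := a) (by omega)
    obtain ⟨u, huT, hune⟩ := hres_a T hTc x y hxy
    have hmem2 : u ∈ eqd G x y := hTs (by simpa using huT)
    exact hune (mem_eqd.mp hmem2)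
  have hnotmem : ¬ (∀ S : Finset V, S.card = a - 1 → IsResolvingSet G ↑S) := by
    intro hyp
    have hle : sInf {k | ∀ S : Finset V, S.card = k → IsResolvingSet G ↑S} ≤ a - 1 :=
      Nat.sInf_le hyp
    omega
  push_neg at hnotmem
  obtain ⟨S0, hS0c, hS0not⟩ := hnotmem
  simp only [IsResolvingSet] at hS0not
  push_neg at hS0not
  obtain ⟨p, q, hpq, hall⟩ := hS0not
  obtain ⟨w1, hw1, w2, hw2, w3, hw3, h12, h13, h23⟩ :=
    three_of_card (s := S0) (by omega)
  have e1 : G.dist w1 p = G.dist w1 q := hall w1 (Finset.mem_coe.mpr hw1)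
  have e2 : G.dist w2 p = G.dist w2 q := hall w2 (Finset.mem_coe.mpr hw2)
  have e3 : G.dist w3 p = G.dist w3 q := hall w3 (Finset.mem_coe.mpr hw3)
  by_cases hdeg : ∃ b z1 z2 z3 : V, G.Adj b z1 ∧ G.Adj b z2 ∧ G.Adj b z3 ∧
      z1 ≠ z2 ∧ z1 ≠ z3 ∧ z2 ≠ z3
  · obtain ⟨b, z1, z2, z3, hb1, hb2, hb3, hz12, hz13, hz23⟩ := hdeg
    haveI : Nonempty (V × V) := ⟨(b, b)⟩
    obtain ⟨⟨x0, y0⟩, hmax⟩ := Finite.exists_max (fun pr : V × V => G.dist pr.1 pr.2)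
    have hDmax : ∀ u v : V, G.dist u v ≤ G.dist x0 y0 := fun u v => hmax (u, v)
    set D := G.dist x0 y0 with hDdef
    have hD1 : 1 ≤ D := by
      have h1 : G.dist b z1 = 1 := SimpleGraph.dist_eq_one_iff_adj.mpr hb1
      have h2 := hDmax b z1
      omega
    have hengine : ∀ x : V, D ≤ 2 * G.dist x b → D ≤ 10 * (a - 1) := by
      intro x hx
      have hL1 : 1 ≤ G.dist x b := by omega
      set L := G.dist x b with hLdef
      obtain ⟨γ, hγ0, hγe, hγadj, hγd, hγij⟩ := geo hconn x b
      have hpL1b : G.Adj (γ (L - 1)) b := by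
        have h1 := hγadj (L-1) (by omega)
        rw [show L - 1 + 1 = L from by omega] at h1
        rwa [hγe L le_rfl] at h1
      obtain ⟨t1, t2, ht1, ht2, ht12, ht1p, ht2p⟩ :
          ∃ t1 t2, G.Adj b t1 ∧ G.Adj b t2 ∧ t1 ≠ t2 ∧ t1 ≠ γ (L-1) ∧ t2 ≠ γ (L-1) := by
        by_cases ez1 : z1 = γ (L-1)
        · exact ⟨z2, z3, hb2, hb3, hz23, by rw [← ez1]; exact hz12.symm,
            by rw [← ez1]; exact hz13.symm⟩
        · by_cases ez2 : z2 = γ (L-1)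
          · exact ⟨z1, z3, hb1, hb3, hz13, ez1, by rw [← ez2]; exact hz23.symm⟩
          · exact ⟨z1, z2, hb1, hb2, hz12, ez1, ez2⟩
      have hcov : ∀ j, j < L → γ j ∈ ((((eqd G t1 (γ (L-1)) ∪ eqd G t1 b) ∪
          eqd G t2 (γ (L-1))) ∪ eqd G t2 b) ∪ eqd G t1 t2) := by
        intro j hj
        have hdjb : G.dist (γ j) b = L - j := (hγd j (by omega)).2
        have hdjp : G.dist (γ j) (γ (L-1)) = L - 1 - j := hγij j (L-1) (by omega) (by omega)
        have hb1' : G.dist b t1 = 1 := SimpleGraph.dist_eq_one_iff_adj.mpr ht1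
        have hb2' : G.dist b t2 = 1 := SimpleGraph.dist_eq_one_iff_adj.mpr ht2
        have hu1 : G.dist (γ j) t1 ≤ G.dist (γ j) b + G.dist b t1 := hconn.dist_triangle
        have hu2 : G.dist (γ j) t2 ≤ G.dist (γ j) b + G.dist b t2 := hconn.dist_triangle
        have hl1 : G.dist (γ j) b ≤ G.dist (γ j) t1 + G.dist t1 b := hconn.dist_triangle
        have hl2 : G.dist (γ j) b ≤ G.dist (γ j) t2 + G.dist t2 b := hconn.dist_triangle
        have ht1b : G.dist t1 b = 1 := by rw [SimpleGraph.dist_comm]; exact hb1'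
        have ht2b : G.dist t2 b = 1 := by rw [SimpleGraph.dist_comm]; exact hb2'
        simp only [Finset.mem_union, mem_eqd]
        omega
      have hLle : L ≤ 5 * (a - 1) := by
        have hinj : Set.InjOn γ ↑(Finset.range L) := by
          intro i hi j hj hij
          simp only [Finset.coe_range, Set.mem_Iio] at hi hj
          have d1 := (hγd i (by omega)).1
          have d2 := (hγd j (by omega)).1
          rw [hij] at d1
          omega
        have hsub : (Finset.range L).image γ ⊆ ((((eqd G t1 (γ (L-1)) ∪ eqd G t1 b) ∪
            eqd G t2 (γ (L-1))) ∪ eqd G t2 b) ∪ eqd G t1 t2) := by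
          intro z hz
          obtain ⟨j, hj, rfl⟩ := Finset.mem_image.mp hz
          exact hcov j (Finset.mem_range.mp hj)
        have hcard1 : ((Finset.range L).image γ).card = L := by
          rw [Finset.card_image_of_injOn hinj, Finset.card_range]
        have hcard2 := Finset.card_le_card hsub
        have c1 : (eqd G t1 (γ (L-1))).card ≤ a - 1 := hM _ _ ht1p
        have c2 : (eqd G t1 b).card ≤ a - 1 := hM _ _ ht1.ne'
        have c3 : (eqd G t2 (γ (L-1))).card ≤ a - 1 := hM _ _ ht2p
        have c4 : (eqd G t2 b).card ≤ a - 1 := hM _ _ ht2.ne'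
        have c5 : (eqd G t1 t2).card ≤ a - 1 := hM _ _ ht12
        have u1 := Finset.card_union_le (eqd G t1 (γ (L-1))) (eqd G t1 b)
        have u2 := Finset.card_union_le (eqd G t1 (γ (L-1)) ∪ eqd G t1 b)
          (eqd G t2 (γ (L-1)))
        have u3 := Finset.card_union_le ((eqd G t1 (γ (L-1)) ∪ eqd G t1 b) ∪
          eqd G t2 (γ (L-1))) (eqd G t2 b)
        have u4 := Finset.card_union_le (((eqd G t1 (γ (L-1)) ∪ eqd G t1 b) ∪
          eqd G t2 (γ (L-1))) ∪ eqd G t2 b) (eqd G t1 t2)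
        omega
      omega
    have hDb : D ≤ 10 * (a - 1) := by
      by_cases hx : D ≤ 2 * G.dist x0 b
      · exact hengine x0 hx
      · apply hengine y0
        have htri : G.dist x0 y0 ≤ G.dist x0 b + G.dist b y0 := hconn.dist_triangle
        have hcomm : G.dist y0 b = G.dist b y0 := SimpleGraph.dist_comm
        omega
    obtain ⟨δ, hδ0, hδe, hδadj, hδd, hδij⟩ := geo hconn x0 y0
    have hδD : δ D = y0 := hδe D le_rfl
    have hcov2 : ∀ u : V, u ≠ x0 → u ≠ y0 →
        u ∈ (Finset.range D).biUnion (fun i => eqd G (δ i) (δ (i+1))) ∪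
          (Finset.range (D-1)).biUnion (fun i => eqd G (δ i) (δ (i+2))) := by
      intro u hux0 huy0
      by_contra hnot
      simp only [Finset.mem_union, Finset.mem_biUnion, Finset.mem_range, mem_eqd] at hnot
      push_neg at hnot
      obtain ⟨hn1, hn2⟩ := hnot
      have hlip : ∀ i, i < D → G.dist u (δ (i+1)) ≤ G.dist u (δ i) + 1 ∧
          G.dist u (δ i) ≤ G.dist u (δ (i+1)) + 1 := by
        intro i hi
        have hadj := hδadj i hi
        have h1 : G.dist (δ i) (δ (i+1)) = 1 := SimpleGraph.dist_eq_one_iff_adj.mpr hadj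
        have h2 : G.dist u (δ (i+1)) ≤ G.dist u (δ i) + G.dist (δ i) (δ (i+1)) :=
          hconn.dist_triangle
        have h3 : G.dist u (δ i) ≤ G.dist u (δ (i+1)) + G.dist (δ (i+1)) (δ i) :=
          hconn.dist_triangle
        have h4 : G.dist (δ (i+1)) (δ i) = 1 := by rw [SimpleGraph.dist_comm]; exact h1
        omega
      rcases steps hD1 (fun i => G.dist u (δ i)) (fun i hi => hn1 i hi)
          (fun i hi => hn2 i (by omega)) hlip with hcase | hcase
      · rw [hδ0, hδD] at hcase
        have hm := hDmax u y0
        have h0 : G.dist u x0 = 0 := by omega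
        exact hux0 (hconn.dist_eq_zero_iff.mp h0)
      · rw [hδ0, hδD] at hcase
        have hm := hDmax u x0
        have h0 : G.dist u y0 = 0 := by omega
        exact huy0 (hconn.dist_eq_zero_iff.mp h0)
    have hb1c : ((Finset.range D).biUnion (fun i => eqd G (δ i) (δ (i+1)))).card ≤
        D * (a-1) := by
      refine le_trans (Finset.card_biUnion_le) ?_
      have hbound : ∀ i ∈ Finset.range D, (eqd G (δ i) (δ (i+1))).card ≤ a - 1 := by
        intro i hi
        apply hM
        have hd := hδij i (i+1) (by omega) (by have := Finset.mem_range.mp hi; omega)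
        intro heq
        rw [heq] at hd
        rw [SimpleGraph.dist_self] at hd
        omega
      calc ∑ i ∈ Finset.range D, (eqd G (δ i) (δ (i+1))).card ≤
          ∑ _i ∈ Finset.range D, (a-1) := Finset.sum_le_sum hbound
        _ = D * (a-1) := by rw [Finset.sum_const, Finset.card_range, smul_eq_mul]
    have hb2c : ((Finset.range (D-1)).biUnion (fun i => eqd G (δ i) (δ (i+2)))).card ≤
        (D-1) * (a-1) := by
      refine le_trans (Finset.card_biUnion_le) ?_
      have hbound : ∀ i ∈ Finset.range (D-1), (eqd G (δ i) (δ (i+2))).card ≤ a - 1 := by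
        intro i hi
        apply hM
        have hd := hδij i (i+2) (by omega) (by have := Finset.mem_range.mp hi; omega)
        intro heq
        rw [heq] at hd
        rw [SimpleGraph.dist_self] at hd
        omega
      calc ∑ i ∈ Finset.range (D-1), (eqd G (δ i) (δ (i+2))).card ≤
          ∑ _i ∈ Finset.range (D-1), (a-1) := Finset.sum_le_sum hbound
        _ = (D-1) * (a-1) := by rw [Finset.sum_const, Finset.card_range, smul_eq_mul]
    have hcount : Fintype.card V ≤ 2 + (D * (a-1) + (D-1) * (a-1)) := by
      have hsub : (Finset.univ : Finset V) ⊆ ({x0, y0} : Finset V) ∪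
          ((Finset.range D).biUnion (fun i => eqd G (δ i) (δ (i+1))) ∪
           (Finset.range (D-1)).biUnion (fun i => eqd G (δ i) (δ (i+2)))) := by
        intro u _
        by_cases h0 : u = x0
        · exact Finset.mem_union_left _ (by simp [h0])
        · by_cases h1 : u = y0
          · exact Finset.mem_union_left _ (by simp [h1])
          · exact Finset.mem_union_right _ (hcov2 u h0 h1)
      have hcard0 : (Finset.univ : Finset V).card = Fintype.card V := Finset.card_univ
      have hc1 := Finset.card_le_card hsub
      have hc2 := Finset.card_union_le ({x0, y0} : Finset V)
        ((Finset.range D).biUnion (fun i => eqd G (δ i) (δ (i+1))) ∪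
         (Finset.range (D-1)).biUnion (fun i => eqd G (δ i) (δ (i+2))))
      have hc3 := Finset.card_union_le
        ((Finset.range D).biUnion (fun i => eqd G (δ i) (δ (i+1))))
        ((Finset.range (D-1)).biUnion (fun i => eqd G (δ i) (δ (i+2))))
      have hc4 : ({x0, y0} : Finset V).card ≤ 2 := by
        have := Finset.card_insert_le x0 ({y0} : Finset V)
        simpa using this
      omega
    obtain ⟨k, hk⟩ := Nat.exists_eq_add_of_le ha
    subst hk
    have h31 : 4 + k - 1 = k + 3 := by omega
    have h35 : 3 * (4 + k) - 5 = 3 * k + 7 := by omega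
    rw [h31] at hcount hDb
    rw [h35]
    have e1' : D * (k+3) ≤ 10 * ((k+3) * (k+3)) := by
      calc D * (k+3) ≤ (10 * (k+3)) * (k+3) := Nat.mul_le_mul_right (k+3) hDb
        _ = 10 * ((k+3) * (k+3)) := by ring
    have e2' : (D - 1) * (k+3) ≤ 10 * ((k+3) * (k+3)) := by
      calc (D-1) * (k+3) ≤ (10 * (k+3)) * (k+3) :=
          Nat.mul_le_mul_right (k+3) (by omega)
        _ = 10 * ((k+3) * (k+3)) := by ring
    have h9 : 9 ≤ (k+3) * (k+3) := by
      calc (9:ℕ) = 3 * 3 := by norm_num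
        _ ≤ (k+3) * (k+3) := Nat.mul_le_mul (by omega) (by omega)
    have hstep1 : Fintype.card V ≤ 196 * ((k+3) * (k+3)) := by
      generalize hq1 : D * (k+3) = P1 at hcount e1'
      generalize hq2 : (D-1) * (k+3) = P2 at hcount e2'
      generalize hq3 : (k+3) * (k+3) = Q at e1' e2' h9 ⊢
      omega
    have h27 : 2 * (k+3) ≤ 3 * k + 7 := by omega
    have h7 : 7 ≤ 3 * k + 7 := by omega
    have hA : (2*(k+3)) * (2*(k+3)) ≤ (3*k+7) * (3*k+7) := Nat.mul_le_mul h27 h27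
    have hB : 7 * 7 ≤ (3*k+7) * (3*k+7) := Nat.mul_le_mul h7 h7
    have hstep2 : 196 * ((k+3) * (k+3)) ≤ (3*k+7)^4 := by
      calc 196 * ((k+3) * (k+3)) = ((2*(k+3)) * (2*(k+3))) * (7 * 7) := by ring
        _ ≤ ((3*k+7) * (3*k+7)) * ((3*k+7) * (3*k+7)) := Nat.mul_le_mul hA hB
        _ = (3*k+7)^4 := by ring
    have hstep3 : (3*k+7)^4 ≤ (3*k+7)^(4+k) := Nat.pow_le_pow_right (by omega) (by omega)
    exact le_trans hstep1 (le_trans hstep2 (le_trans hstep3 (Nat.le_add_right _ _)))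
  · exfalso
    have hdeg2 : ∀ v t1 t2 t3 : V, G.Adj v t1 → G.Adj v t2 → G.Adj v t3 →
        t1 = t2 ∨ t1 = t3 ∨ t2 = t3 := by
      intro v t1 t2 t3 a1 a2 a3
      by_contra hcon
      push_neg at hcon
      exact hdeg ⟨v, t1, t2, t3, a1, a2, a3, hcon.1, hcon.2.1, hcon.2.2⟩
    exact mkill hconn hdeg2 hpq h12 h13 h23 e1 e2 e3
end
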